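/- arXiv:2301.07222 — 6 statements merged into one kernel-verified Lean document; each statement's English description precedes it below -/
import Mathlib

section
/- A primitive word v over a totally ordered alphabet is perfectly clustering if and only if for every circular factor of v of the form a·u·b (with a, b letters and u a word), there is no circular factor of v of the form a'·u·b' with a < a' and b < b'. -/
variable {α : Type*}

/-- The list of all cyclic rotations of a word. -/
def rotations (w : List α) : List (List α) :=
  (List.range w.length).map (fun i => w.rotate i)

/-- The Burrows–Wheeler transform: last letters of the lexicographically
sorted list of rotations. -/
def BWT [LinearOrder α] (w : List α) : List α :=
  (List.insertionSort (· ≤ ·) (rotations w)).filterMap List.getLast?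

/-- A word is primitive if it is nonempty and not a proper power. -/
def IsPrimitiveWord (w : List α) : Prop :=
  w ≠ [] ∧ ∀ (u : List α) (k : ℕ), w = (List.replicate k u).flatten → k = 1

/-- A primitive word is perfectly clustering if its Burrows–Wheeler
transform is weakly decreasing. -/
def PerfectlyClustering [LinearOrder α] (w : List α) : Prop :=
  IsPrimitiveWord w ∧ List.Chain' (· ≥ ·) (BWT w)

/-- `u` is a circular factor of `w`: a factor of `ww` of length at most `|w|`. -/
def CircFactor (u w : List α) : Prop :=
  u.length ≤ w.length ∧ u <:+: (w ++ w)

section Aux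

open List

lemma mem_rotations_iff {v r : List α} :
    r ∈ rotations v ↔ ∃ i, i < v.length ∧ v.rotate i = r := by
  simp [rotations, List.mem_map, List.mem_range]

lemma rotate_infix (v : List α) (i : ℕ) : v.rotate i <:+: v ++ v := by
  rcases eq_or_ne v [] with rfl | hv
  · simp
  have hn : 0 < v.length := List.length_pos_iff.mpr hv
  have hm : i % v.length ≤ v.length := le_of_lt (Nat.mod_lt _ hn)
  rw [← List.rotate_mod, List.rotate_eq_drop_append_take hm]
  exact ⟨v.take (i % v.length), v.drop (i % v.length), by
    rw [List.append_assoc, List.append_assoc, List.take_append_drop,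
      ← List.append_assoc, List.take_append_drop]⟩

lemma prefix_rotate_of_eq {v s u' t : List α} (hst : s ++ u' ++ t = v ++ v)
    (hs : s.length ≤ v.length) (hlen : u'.length ≤ v.length) :
    u' <+: v.rotate s.length := by
  have h1 : (v ++ v).drop s.length = u' ++ t := by
    rw [← hst, List.append_assoc, List.drop_left]
  have h2 : (v ++ v).drop s.length = v.drop s.length ++ v :=
    List.drop_append_of_le_length hs
  have hu : u' <+: v.drop s.length ++ v := by
    rw [← h2, h1]; exact List.prefix_append _ _
  have hrot : v.rotate s.length <+: v.drop s.length ++ v := by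
    rw [List.rotate_eq_drop_append_take hs]
    exact ⟨v.drop s.length, by rw [List.append_assoc, List.take_append_drop]⟩
  exact List.prefix_of_prefix_length_le hu hrot (by simp [hlen])

lemma infix_prefix_rotate {v u' : List α} (hv : v ≠ [])
    (hlen : u'.length ≤ v.length) (hinf : u' <:+: v ++ v) :
    ∃ i, i < v.length ∧ u' <+: v.rotate i := by
  have hn : 0 < v.length := List.length_pos_iff.mpr hv
  obtain ⟨s, t, hst⟩ := hinf
  by_cases hs : s.length ≤ v.length
  · refine ⟨s.length % v.length, Nat.mod_lt _ hn, ?_⟩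
    rw [List.rotate_mod]
    exact prefix_rotate_of_eq hst hs hlen
  · push_neg at hs
    have hsp : s <+: v ++ v := ⟨u' ++ t, by rw [← List.append_assoc]; exact hst⟩
    have hvp : v <+: s :=
      List.prefix_of_prefix_length_le (List.prefix_append _ _) hsp (le_of_lt hs)
    obtain ⟨s', rfl⟩ := hvp
    have hst' : s' ++ u' ++ (t ++ v) = v ++ v := by
      have h0 : (v ++ s') ++ u' ++ t = v ++ (s' ++ u' ++ t) := by
        simp [List.append_assoc]
      rw [h0] at hst
      have hv' : s' ++ u' ++ t = v := List.append_cancel_left hst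
      have h1 : s' ++ u' ++ (t ++ v) = (s' ++ u' ++ t) ++ v := by
        simp [List.append_assoc]
      rw [h1, hv']
    have hs' : s'.length ≤ v.length := by
      have := congrArg List.length hst'
      simp at this; omega
    exact ⟨s'.length % v.length, Nat.mod_lt _ hn, by
      rw [List.rotate_mod]; exact prefix_rotate_of_eq hst' hs' hlen⟩

lemma circ_iff {v : List α} (hv : v ≠ []) (a b : α) (u : List α) :
    CircFactor (a :: (u ++ [b])) v ↔
      u.length + 2 ≤ v.length ∧
        ∃ r ∈ rotations v, (u ++ [b]) <+: r ∧ r.getLast? = some a := by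
  have hn : 0 < v.length := List.length_pos_iff.mpr hv
  constructor
  · rintro ⟨hlen, hinf⟩
    have hlen' : u.length + 2 ≤ v.length := by simp at hlen; omega
    obtain ⟨i, hi, hpre⟩ := infix_prefix_rotate hv (by simpa using hlen) hinf
    obtain ⟨k, hk⟩ := hpre
    refine ⟨hlen', v.rotate (i + 1), ?_, ?_, ?_⟩
    · rw [← List.rotate_mod]
      exact mem_rotations_iff.mpr ⟨(i + 1) % v.length, Nat.mod_lt _ hn, rfl⟩
    · have : v.rotate (i + 1) = ((u ++ [b]) ++ k) ++ [a] := by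
        rw [← List.rotate_rotate, ← hk]
        simp [List.rotate_cons_succ]
      rw [this]
      exact (List.prefix_append _ _).trans (List.prefix_append _ _)
    · have : v.rotate (i + 1) = ((u ++ [b]) ++ k) ++ [a] := by
        rw [← List.rotate_rotate, ← hk]
        simp [List.rotate_cons_succ]
      rw [this, List.getLast?_concat]
  · rintro ⟨hlen, r, hr, hpre, hlast⟩
    obtain ⟨i, hi, rfl⟩ := mem_rotations_iff.mp hr
    have hrlen : (v.rotate i).length = v.length := List.length_rotate _ _
    set r := v.rotate i with hrdef
    have hwa : r.dropLast ++ [a] = r :=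
      List.dropLast_append_getLast? a hlast
    set w := r.dropLast with hwdef
    have hwlen : w.length = v.length - 1 := by
      have := congrArg List.length hwa
      simp at this; omega
    have hpw : u ++ [b] <+: w := by
      refine List.prefix_of_prefix_length_le (l₂ := w) (l₃ := w ++ [a]) ?_ (List.prefix_append _ _) ?_
      · rw [hwa]; exact hpre
      · simp [hwlen]; omega
    have haw : a :: w = r.rotate w.length := by
      rw [← hwa, List.rotate_eq_drop_append_take (by simp),
        List.drop_left, List.take_left]
      rfl
    have haw2 : a :: w = v.rotate (i + w.length) := by
      rw [haw, hrdef, List.rotate_rotate]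
    refine ⟨by simp; omega, ?_⟩
    have h1 : a :: (u ++ [b]) <+: a :: w :=
      List.cons_prefix_cons.mpr ⟨rfl, hpw⟩
    exact h1.isInfix.trans (haw2 ▸ rotate_infix v (i + w.length))

lemma lex_of_common_prefix [LinearOrder α] {u : List α} {b b' : α} {s t : List α}
    (hb : b < b') : (u ++ b :: s) < (u ++ b' :: t) := by
  induction u with
  | nil => exact List.Lex.rel hb
  | cons c u ih => exact List.Lex.cons ih

lemma lex_decomp [LinearOrder α] {x y : List α} (h : x < y) (hl : x.length = y.length) :
    ∃ (u : List α) (b b' : α), b < b' ∧ (u ++ [b]) <+: x ∧ (u ++ [b']) <+: y := by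
  have h' : List.Lex (· < ·) x y := h
  clear h
  induction h' with
  | nil => simp at hl
  | @rel a l₁ b l₂ hab => exact ⟨[], a, b, hab, ⟨l₁, rfl⟩, ⟨l₂, rfl⟩⟩
  | @cons a l₁ l₂ hlex ih =>
    obtain ⟨u, b, b', hbb, h1, h2⟩ := ih (by simpa using hl)
    exact ⟨a :: u, b, b', hbb, List.cons_prefix_cons.mpr ⟨rfl, h1⟩,
      List.cons_prefix_cons.mpr ⟨rfl, h2⟩⟩

lemma filterMap_getLast?_eq (d : α) (l : List (List α)) (h : ∀ x ∈ l, x ≠ []) :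
    l.filterMap List.getLast? = l.map (fun x => x.getLast?.getD d) := by
  induction l with
  | nil => rfl
  | cons x l ih =>
    have hx : x ≠ [] := h x (by simp)
    obtain ⟨a, ha⟩ : ∃ a, x.getLast? = some a :=
      Option.isSome_iff_exists.mp (List.getLast?_isSome.mpr hx)
    rw [List.filterMap_cons, ha, List.map_cons,
      ih (fun y hy => h y (by simp [hy]))]
    simp [ha]

end Aux

theorem stmt0 [LinearOrder α] (v : List α) (hv : IsPrimitiveWord v) :
    PerfectlyClustering v ↔
      ∀ (a b : α) (u : List α), CircFactor (a :: (u ++ [b])) v →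
        ∀ (a' b' : α), a < a' → b < b' → ¬ CircFactor (a' :: (u ++ [b'])) v := by
  classical
  obtain ⟨hv0, hv2⟩ := hv
  have hn : 0 < v.length := List.length_pos_iff.mpr hv0
  set s := List.insertionSort (· ≤ ·) (rotations v) with hs
  have hsort : List.Pairwise (· ≤ ·) s := List.pairwise_insertionSort _ _
  have hperm : List.Perm s (rotations v) := List.perm_insertionSort _ _
  have hne : ∀ x ∈ s, x ≠ [] := by
    intro x hx
    have : x ∈ rotations v := hperm.subset hx
    obtain ⟨i, hi, rfl⟩ := mem_rotations_iff.mp this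
    intro h0
    have h1 : (v.rotate i).length = 0 := by rw [h0]; rfl
    rw [List.length_rotate] at h1
    omega
  set d : α := v.getLast hv0 with hd
  set f : List α → α := fun x => x.getLast?.getD d with hf
  have hBWT : BWT v = s.map f := filterMap_getLast?_eq d s hne
  have hflast : ∀ (x : List α) (c : α), x.getLast? = some c → f x = c := by
    intro x c hc; simp [hf, hc]
  constructor
  · rintro ⟨-, hchain⟩ a b u hc a' b' haa hbb hc'
    obtain ⟨hlen, r, hr, hpre, hlast⟩ := (circ_iff hv0 a b u).mp hc
    obtain ⟨hlen', r', hr', hpre', hlast'⟩ := (circ_iff hv0 a' b' u).mp hc'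
    -- r < r'
    obtain ⟨k, hk⟩ := hpre
    obtain ⟨k', hk'⟩ := hpre'
    have hlt : r < r' := by
      rw [← hk, ← hk', List.append_assoc, List.append_assoc]
      exact lex_of_common_prefix hbb
    -- pairwise from chain
    rw [hBWT] at hchain
    have hpair : List.Pairwise (fun x y : List α => f x ≥ f y) s :=
      List.pairwise_map.mp (List.isChain_iff_pairwise.mp hchain)
    have hrs : r ∈ s := hperm.mem_iff.mpr hr
    have hrs' : r' ∈ s := hperm.mem_iff.mpr hr'
    obtain ⟨i, hi⟩ := List.mem_iff_get.mp hrs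
    obtain ⟨j, hj⟩ := List.mem_iff_get.mp hrs'
    have hge : f r ≥ f r' := by
      rcases lt_trichotomy i j with hij | hij | hij
      · rw [← hi, ← hj]
        exact List.pairwise_iff_get.mp hpair i j hij
      · exfalso; rw [hij, hj] at hi; exact lt_irrefl _ (hi ▸ hlt)
      · exfalso
        have := hsort.rel_get_of_lt hij
        rw [hi, hj] at this
        exact absurd hlt (not_lt.mpr this)
    rw [hflast r a hlast, hflast r' a' hlast'] at hge
    exact absurd haa (not_lt.mpr hge)
  · intro h
    refine ⟨⟨hv0, hv2⟩, ?_⟩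
    rw [hBWT]
    unfold List.Chain'
    rw [List.isChain_map, List.isChain_iff_getElem]
    intro i hi
    change f (s.get ⟨i, by omega⟩) ≥ f (s.get ⟨i + 1, hi⟩)
    simp only [ge_iff_le]
    set x := s.get ⟨i, by omega⟩ with hx
    set y := s.get ⟨i + 1, by omega⟩ with hy
    have hxy : x ≤ y := hsort.rel_get_of_lt (by simp)
    rcases eq_or_lt_of_le hxy with heq | hlt
    · rw [heq]
    have hxm : x ∈ rotations v := hperm.subset (List.get_mem _ _)
    have hym : y ∈ rotations v := hperm.subset (List.get_mem _ _)
    obtain ⟨ix, hix, hxr⟩ := mem_rotations_iff.mp hxm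
    obtain ⟨iy, hiy, hyr⟩ := mem_rotations_iff.mp hym
    have hxl : x.length = v.length := by rw [← hxr]; exact List.length_rotate _ _
    have hyl : y.length = v.length := by rw [← hyr]; exact List.length_rotate _ _
    obtain ⟨u, b, b', hbb, hpx, hpy⟩ := lex_decomp hlt (hxl.trans hyl.symm)
    have hperm_xy : List.Perm x y := by
      rw [← hxr, ← hyr]
      exact (List.rotate_perm _ _).trans (List.rotate_perm _ _).symm
    by_cases hfull : u.length + 2 ≤ v.length
    · -- get last letters
      by_contra hcon
      push_neg at hcon
      have hxne : x ≠ [] := by intro h0; rw [h0] at hxl; simp at hxl; omega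
      have hyne : y ≠ [] := by intro h0; rw [h0] at hyl; simp at hyl; omega
      obtain ⟨ax, hax⟩ : ∃ c, x.getLast? = some c :=
        Option.isSome_iff_exists.mp (List.getLast?_isSome.mpr hxne)
      obtain ⟨ay, hay⟩ : ∃ c, y.getLast? = some c :=
        Option.isSome_iff_exists.mp (List.getLast?_isSome.mpr hyne)
      rw [hflast x ax hax, hflast y ay hay] at hcon
      have hcx : CircFactor (ax :: (u ++ [b])) v :=
        (circ_iff hv0 ax b u).mpr ⟨hfull, x, hxm, hpx, hax⟩
      have hcy : CircFactor (ay :: (u ++ [b'])) v :=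
        (circ_iff hv0 ay b' u).mpr ⟨hfull, y, hym, hpy, hay⟩
      exact h ax b u hcx ay b' hcon hbb hcy
    · -- full-length case: x = u ++ [b], y = u ++ [b'], contradiction via perm
      exfalso
      have hul : u.length + 1 = v.length := by
        have hle := hpx.length_le
        rw [hxl] at hle
        simp at hle
        omega
      have hxeq : x = u ++ [b] := (hpx.eq_of_length (by simp [hxl]; omega)).symm
      have hyeq : y = u ++ [b'] := (hpy.eq_of_length (by simp [hyl]; omega)).symm
      have hbb2 : b ≠ b' := ne_of_lt hbb
      have hc := hperm_xy.count_eq b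
      rw [hxeq, hyeq, List.count_append, List.count_append] at hc
      simp [List.count_cons, hbb2] at hc
      exact hbb2 hc.symm
end

section
/- For n even, the ⌈(n-1)/2⌉ = n/2 vectors b^i (1 ≤ i ≤ n/2 - 1) defined by b^i = -2e_1 + e_{i+1} + e_{n-i+1}, together with b^{n/2} = -e_1 + e_{(n/2)+1}, are linearly independent, each has coordinate sum zero, and they are pairwise orthogonal (and each is isotropic) with respect to the form ⟨(a_i),(b_i)⟩ = Σ_i a_i b_i + 2 Σ_{i<j} a_i b_j on ℚ^n. -/
/-- The Euler form of `Λ_n` in `g`-vector coordinates on `ℚ^n`. -/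
def eulerFormQ (n : ℕ) (a b : Fin n → ℚ) : ℚ :=
  (∑ i, a i * b i) + 2 * ∑ i, ∑ j, if i < j then a i * b j else 0

/-- The `k`-th standard basis vector of `ℚ^n`, with 1-based index `k`. -/
def stdBasis (n : ℕ) (k : ℕ) : Fin n → ℚ := fun j => if (j : ℕ) + 1 = k then 1 else 0

/-- The vector `b^i`: for `1 ≤ i ≤ n/2 - 1`, `b^i = -2 e_1 + e_{i+1} + e_{n-i+1}`,
and `b^{n/2} = -e_1 + e_{n/2+1}`. -/
def bvec (n : ℕ) (i : ℕ) : Fin n → ℚ :=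
  if i = n / 2 then - stdBasis n 1 + stdBasis n (n / 2 + 1)
  else (-2 : ℚ) • stdBasis n 1 + stdBasis n (i + 1) + stdBasis n (n - i + 1)

lemma stdBasis_eq (n k : ℕ) (hk1 : 1 ≤ k) (hk2 : k ≤ n) :
    stdBasis n k = fun j => if j = (⟨k-1, by omega⟩ : Fin n) then 1 else 0 := by
  funext j
  refine if_congr ⟨fun h => by apply Fin.ext; simp; omega, fun h => ?_⟩ rfl rfl
  have : (j : ℕ) = k - 1 := by rw [h]
  omega

lemma sum_stdBasis (n k : ℕ) (hk1 : 1 ≤ k) (hk2 : k ≤ n) : ∑ j, stdBasis n k j = 1 := by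
  rw [stdBasis_eq n k hk1 hk2]
  simp

lemma euler_basis (n k l : ℕ) (hk1 : 1 ≤ k) (hk2 : k ≤ n) (hl1 : 1 ≤ l) (hl2 : l ≤ n) :
    eulerFormQ n (stdBasis n k) (stdBasis n l) =
      (if k = l then 1 else 0) + 2 * (if k < l then 1 else 0) := by
  set K : Fin n := ⟨k-1, by omega⟩ with hK
  set L : Fin n := ⟨l-1, by omega⟩ with hL
  rw [eulerFormQ, stdBasis_eq n k hk1 hk2, stdBasis_eq n l hl1 hl2]
  have h1 : ∀ i : Fin n,
      (if i = K then (1:ℚ) else 0) * (if i = L then (1:ℚ) else 0)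
        = if i = K then (if i = L then (1:ℚ) else 0) else 0 := by
    intro i; split_ifs <;> norm_num
  have h2 : ∀ i j : Fin n,
      (if i < j then (if i = K then (1:ℚ) else 0) * (if j = L then (1:ℚ) else 0) else 0)
        = if j = L then (if i = K then (if i < j then (1:ℚ) else 0) else 0) else 0 := by
    intro i j; split_ifs <;> norm_num
  rw [← hK, ← hL]
  simp only [h1, h2, Finset.sum_ite_eq', Finset.mem_univ, if_true]
  have h3 : (K = L) ↔ (k = l) := by rw [Fin.ext_iff]; simp [hK, hL]; omega
  have h4 : (K < L) ↔ (k < l) := by rw [Fin.lt_def]; simp [hK, hL]; omega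
  rw [if_congr h3 rfl rfl, if_congr h4 rfl rfl]

lemma ite_add_zero' (p : Prop) [Decidable p] (x y : ℚ) :
    (if p then x + y else 0) = (if p then x else 0) + (if p then y else 0) := by
  split <;> simp

lemma ite_mul_zero' (p : Prop) [Decidable p] (c x : ℚ) :
    (if p then c * x else 0) = c * (if p then x else 0) := by
  split <;> simp

lemma euler_add_left (n : ℕ) (a a' b : Fin n → ℚ) :
    eulerFormQ n (a + a') b = eulerFormQ n a b + eulerFormQ n a' b := by
  simp only [eulerFormQ, Pi.add_apply, add_mul, ite_add_zero', Finset.sum_add_distrib]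
  ring

lemma euler_add_right (n : ℕ) (a b b' : Fin n → ℚ) :
    eulerFormQ n a (b + b') = eulerFormQ n a b + eulerFormQ n a b' := by
  simp only [eulerFormQ, Pi.add_apply, mul_add, ite_add_zero', Finset.sum_add_distrib]
  ring

lemma euler_smul_left (n : ℕ) (c : ℚ) (a b : Fin n → ℚ) :
    eulerFormQ n (c • a) b = c * eulerFormQ n a b := by
  simp only [eulerFormQ, Pi.smul_apply, smul_eq_mul, mul_assoc, ite_mul_zero',
    ← Finset.mul_sum]
  ring

lemma euler_smul_right (n : ℕ) (c : ℚ) (a b : Fin n → ℚ) :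
    eulerFormQ n a (c • b) = c * eulerFormQ n a b := by
  simp only [eulerFormQ, Pi.smul_apply, smul_eq_mul, mul_left_comm _ c, ite_mul_zero',
    ← Finset.mul_sum]
  ring

lemma euler_neg_left (n : ℕ) (a b : Fin n → ℚ) :
    eulerFormQ n (-a) b = - eulerFormQ n a b := by
  have h : -a = (-1 : ℚ) • a := by funext j; simp
  rw [h, euler_smul_left]; ring

lemma euler_neg_right (n : ℕ) (a b : Fin n → ℚ) :
    eulerFormQ n a (-b) = - eulerFormQ n a b := by
  have h : -b = (-1 : ℚ) • b := by funext j; simp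
  rw [h, euler_smul_right]; ring

lemma E_eq (n k l : ℕ) (h1 : 1 ≤ k) (h2 : k ≤ n) (h3 : 1 ≤ l) (h4 : l ≤ n) (h : k = l) :
    eulerFormQ n (stdBasis n k) (stdBasis n l) = 1 := by
  rw [euler_basis n k l h1 h2 h3 h4, if_pos h, if_neg (by omega)]; norm_num

lemma E_lt (n k l : ℕ) (h1 : 1 ≤ k) (h2 : k ≤ n) (h3 : 1 ≤ l) (h4 : l ≤ n) (h : k < l) :
    eulerFormQ n (stdBasis n k) (stdBasis n l) = 2 := by
  rw [euler_basis n k l h1 h2 h3 h4, if_neg (by omega), if_pos h]; norm_num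

lemma E_gt (n k l : ℕ) (h1 : 1 ≤ k) (h2 : k ≤ n) (h3 : 1 ≤ l) (h4 : l ≤ n) (h : l < k) :
    eulerFormQ n (stdBasis n k) (stdBasis n l) = 0 := by
  rw [euler_basis n k l h1 h2 h3 h4, if_neg (by omega), if_neg (by omega)]; norm_num

lemma bvec_mid (n t : ℕ) (p : Fin n) (hn : 2 ∣ n) (ht1 : 1 ≤ t) (ht2 : t ≤ n/2)
    (hp1 : 1 ≤ (p:ℕ)) (hp2 : (p:ℕ) ≤ n/2) :
    bvec n t p = if (p:ℕ) = t then 1 else 0 := by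
  unfold bvec
  by_cases h : t = n/2
  · rw [if_pos h]
    simp only [Pi.add_apply, Pi.neg_apply, stdBasis]
    rw [if_neg (by omega)]
    subst h
    split_ifs <;> first | (exfalso; omega) | norm_num
  · rw [if_neg h]
    simp only [Pi.add_apply, Pi.smul_apply, stdBasis, smul_eq_mul]
    rw [if_neg (by omega), if_neg (show ¬((p:ℕ) + 1 = n - t + 1) by omega)]
    split_ifs <;> first | (exfalso; omega) | norm_num

theorem stmt9 (n : ℕ) (hn : 2 ∣ n) (hpos : 0 < n) :
    LinearIndependent ℚ (fun i : Fin (n / 2) => bvec n ((i : ℕ) + 1)) ∧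
    (∀ i, 1 ≤ i → i ≤ n / 2 → ∑ j, bvec n i j = 0) ∧
    (∀ i j, 1 ≤ i → i ≤ n / 2 → 1 ≤ j → j ≤ n / 2 →
      eulerFormQ n (bvec n i) (bvec n j) = 0) := by
  have hn2 : 2 ≤ n := by omega
  refine ⟨?_, ?_, ?_⟩
  · -- linear independence
    rw [Fintype.linearIndependent_iff]
    intro c hc i
    have hm : (i:ℕ)+1 < n := by have := i.isLt; omega
    have h := congrFun hc ⟨(i:ℕ)+1, hm⟩
    simp only [Finset.sum_apply, Pi.zero_apply] at h
    have key : ∀ i' : Fin (n/2),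
        (c i' • bvec n ((i':ℕ)+1)) ⟨(i:ℕ)+1, hm⟩ = if i' = i then c i' else 0 := by
      intro i'
      have hb := bvec_mid n ((i':ℕ)+1) ⟨(i:ℕ)+1, hm⟩ hn (by omega)
        (by have := i'.isLt; omega) (by simp) (by have := i.isLt; show (i:ℕ)+1 ≤ n/2; omega)
      rw [Pi.smul_apply, hb, smul_eq_mul]
      rcases eq_or_ne i' i with hii | hii
      · subst hii; simp
      · have hne : ((⟨(i:ℕ)+1, hm⟩ : Fin n) : ℕ) ≠ (i':ℕ)+1 := by
          simp only []
          intro hcon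
          exact hii (Fin.ext (by omega))
        rw [if_neg hne, if_neg hii]
        norm_num
    rw [Finset.sum_congr rfl (fun i' _ => key i'), Finset.sum_ite_eq' Finset.univ i c] at h
    simpa using h
  · -- sums are zero
    intro i hi1 hi2
    by_cases h : i = n/2
    · rw [bvec, if_pos h]
      simp only [Pi.add_apply, Pi.neg_apply]
      rw [Finset.sum_add_distrib, Finset.sum_neg_distrib,
        sum_stdBasis n 1 (by omega) (by omega),
        sum_stdBasis n (n/2+1) (by omega) (by omega)]
      norm_num
    · rw [bvec, if_neg h]
      simp only [Pi.add_apply, Pi.smul_apply, smul_eq_mul]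
      rw [Finset.sum_add_distrib, Finset.sum_add_distrib, ← Finset.mul_sum,
        sum_stdBasis n 1 (by omega) (by omega),
        sum_stdBasis n (i+1) (by omega) (by omega),
        sum_stdBasis n (n-i+1) (by omega) (by omega)]
      norm_num
  · -- orthogonality
    intro i j hi1 hi2 hj1 hj2
    unfold bvec
    by_cases hi : i = n/2 <;> by_cases hj : j = n/2
    · rw [if_pos hi, if_pos hj]
      simp only [euler_add_left, euler_add_right, euler_neg_left, euler_neg_right]
      rw [E_eq n 1 1 (by omega) (by omega) (by omega) (by omega) rfl,
        E_lt n 1 (n/2+1) (by omega) (by omega) (by omega) (by omega) (by omega),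
        E_gt n (n/2+1) 1 (by omega) (by omega) (by omega) (by omega) (by omega),
        E_eq n (n/2+1) (n/2+1) (by omega) (by omega) (by omega) (by omega) rfl]
      ring
    · rw [if_pos hi, if_neg hj]
      simp only [euler_add_left, euler_add_right, euler_neg_left, euler_neg_right,
        euler_smul_left, euler_smul_right]
      rw [E_eq n 1 1 (by omega) (by omega) (by omega) (by omega) rfl,
        E_lt n 1 (j+1) (by omega) (by omega) (by omega) (by omega) (by omega),
        E_lt n 1 (n-j+1) (by omega) (by omega) (by omega) (by omega) (by omega),
        E_gt n (n/2+1) 1 (by omega) (by omega) (by omega) (by omega) (by omega),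
        E_gt n (n/2+1) (j+1) (by omega) (by omega) (by omega) (by omega) (by omega),
        E_lt n (n/2+1) (n-j+1) (by omega) (by omega) (by omega) (by omega) (by omega)]
      ring
    · rw [if_neg hi, if_pos hj]
      simp only [euler_add_left, euler_add_right, euler_neg_left, euler_neg_right,
        euler_smul_left, euler_smul_right]
      rw [E_eq n 1 1 (by omega) (by omega) (by omega) (by omega) rfl,
        E_lt n 1 (n/2+1) (by omega) (by omega) (by omega) (by omega) (by omega),
        E_gt n (i+1) 1 (by omega) (by omega) (by omega) (by omega) (by omega),
        E_lt n (i+1) (n/2+1) (by omega) (by omega) (by omega) (by omega) (by omega),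
        E_gt n (n-i+1) 1 (by omega) (by omega) (by omega) (by omega) (by omega),
        E_gt n (n-i+1) (n/2+1) (by omega) (by omega) (by omega) (by omega) (by omega)]
      ring
    · rw [if_neg hi, if_neg hj]
      simp only [euler_add_left, euler_add_right, euler_neg_left, euler_neg_right,
        euler_smul_left, euler_smul_right]
      rw [E_eq n 1 1 (by omega) (by omega) (by omega) (by omega) rfl,
        E_lt n 1 (j+1) (by omega) (by omega) (by omega) (by omega) (by omega),
        E_lt n 1 (n-j+1) (by omega) (by omega) (by omega) (by omega) (by omega),
        E_gt n (i+1) 1 (by omega) (by omega) (by omega) (by omega) (by omega),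
        E_lt n (i+1) (n-j+1) (by omega) (by omega) (by omega) (by omega) (by omega),
        E_gt n (n-i+1) 1 (by omega) (by omega) (by omega) (by omega) (by omega),
        E_gt n (n-i+1) (j+1) (by omega) (by omega) (by omega) (by omega) (by omega)]
      rcases lt_trichotomy i j with hij | hij | hij
      · rw [E_lt n (i+1) (j+1) (by omega) (by omega) (by omega) (by omega) (by omega),
          E_gt n (n-i+1) (n-j+1) (by omega) (by omega) (by omega) (by omega) (by omega)]
        ring
      · rw [E_eq n (i+1) (j+1) (by omega) (by omega) (by omega) (by omega) (by omega),
          E_eq n (n-i+1) (n-j+1) (by omega) (by omega) (by omega) (by omega) (by omega)]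
        ring
      · rw [E_gt n (i+1) (j+1) (by omega) (by omega) (by omega) (by omega) (by omega),
          E_lt n (n-i+1) (n-j+1) (by omega) (by omega) (by omega) (by omega) (by omega)]
        ring
end

section
/- Let w be a weakly decreasing word over a totally ordered alphabet. Then every necklace (conjugacy class of words) in the multiset Φ(w) is the conjugacy class of a perfectly clustering word, where Φ is the Gessel–Reutenauer map sending w to the multiset of primitive necklaces obtained from the cycles of the inverse of the standard permutation of w. -/
variable {α : Type*}

/-- Positions of the word sorted by letter (ties broken by position),
i.e. the list whose `r`-th entry is the position of rank `r`. -/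
def sortedPositions [LinearOrder α] (w : List α) : List (Fin w.length) :=
  List.insertionSort (fun i j => toLex (w.get i, (i:ℕ)) ≤ toLex (w.get j, (j:ℕ)))
    (List.finRange w.length)

theorem length_sortedPositions [LinearOrder α] (w : List α) :
    (sortedPositions w).length = w.length := by
  simp [sortedPositions]

/-- The inverse of the standard permutation of `w`: `tau w r` is the position
of the letter of rank `r`. -/
def tau [LinearOrder α] (w : List α) : Fin w.length → Fin w.length :=
  fun r => (sortedPositions w).get (Fin.cast (length_sortedPositions w).symm r)

/-- The word read along the cycle of `tau w` through position `j`. -/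
noncomputable def cycleWord [LinearOrder α] (w : List α) (j : Fin w.length) : List α :=
  (List.range (Function.minimalPeriod (tau w) j)).map (fun t => w.get ((tau w)^[t] j))

section Aux

variable [LinearOrder α] (w : List α)

theorem nodup_sortedPositions : (sortedPositions w).Nodup :=
  ((List.perm_insertionSort _ _).nodup_iff).mpr (List.nodup_finRange _)

theorem tau_injective : Function.Injective (tau w) := by
  intro a b h
  have h2 := (List.nodup_iff_injective_get.mp (nodup_sortedPositions w)) h
  exact Fin.cast_injective _ h2

theorem tau_bijective : Function.Bijective (tau w) :=
  Finite.injective_iff_bijective.mp (tau_injective w)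

noncomputable def sigma : Fin w.length → Fin w.length :=
  (Equiv.ofBijective _ (tau_bijective w)).symm

theorem sigma_tau (x : Fin w.length) : sigma w (tau w x) = x :=
  (Equiv.ofBijective _ (tau_bijective w)).symm_apply_apply x

theorem tau_sigma (x : Fin w.length) : tau w (sigma w x) = x :=
  (Equiv.ofBijective _ (tau_bijective w)).apply_symm_apply x

theorem sigma_injective : Function.Injective (sigma w) := by
  intro a b h
  rw [← tau_sigma w a, ← tau_sigma w b, h]

theorem key_of_lt {w : List α} {r r' : Fin w.length} (h : r < r') :
    w.get (tau w r) < w.get (tau w r') ∨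
      (w.get (tau w r) = w.get (tau w r') ∧ tau w r < tau w r') := by
  letI : IsTotal (Fin w.length)
      (fun i j => toLex (w.get i, (i:ℕ)) ≤ toLex (w.get j, (j:ℕ))) :=
    ⟨fun a b => le_total _ _⟩
  letI : IsTrans (Fin w.length)
      (fun i j => toLex (w.get i, (i:ℕ)) ≤ toLex (w.get j, (j:ℕ))) :=
    ⟨fun a b c hab hbc => le_trans hab hbc⟩
  have hs : (sortedPositions w).Pairwise
      (fun i j => toLex (w.get i, (i:ℕ)) ≤ toLex (w.get j, (j:ℕ))) :=
    List.pairwise_insertionSort _ _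
  have hab : (Fin.cast (length_sortedPositions w).symm r) <
      (Fin.cast (length_sortedPositions w).symm r') := h
  have hrel := hs.rel_get_of_lt hab
  have hne : tau w r ≠ tau w r' := fun he => absurd (tau_injective w he) (ne_of_lt h)
  rw [Prod.Lex.le_iff] at hrel
  rcases hrel with h1 | ⟨h1, h2⟩
  · exact Or.inl h1
  · refine Or.inr ⟨h1, ?_⟩
    have : (tau w r : ℕ) ≠ (tau w r' : ℕ) := fun he => hne (Fin.ext he)
    exact Fin.lt_def.mpr (lt_of_le_of_ne h2 this)

end Aux

section Main
variable [LinearOrder α] (w : List α)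

/-- The word of length `t` read along the `tau`-orbit of position `i`. -/
def pref (t : ℕ) (i : Fin w.length) : List α :=
  (List.range t).map (fun s => w.get ((tau w)^[s] i))

theorem length_pref (t : ℕ) (i : Fin w.length) : (pref w t i).length = t := by
  simp [pref]

theorem getElem_pref (t : ℕ) (i : Fin w.length) (s : ℕ) (hs : s < t) :
    (pref w t i)[s]'(by simpa [length_pref] using hs) = w.get ((tau w)^[s] i) := by
  simp [pref]

theorem pref_succ (t : ℕ) (i : Fin w.length) :
    pref w (t+1) i = w.get i :: pref w t (tau w i) := by
  unfold pref
  rw [List.range_succ_eq_map, List.map_cons, List.map_map]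
  simp [Function.iterate_succ_apply, Function.comp]

theorem main_lemma (t : ℕ) : ∀ r r' : Fin w.length, r < r' →
    pref w t (tau w r) < pref w t (tau w r') ∨
      (pref w t (tau w r) = pref w t (tau w r') ∧
        sigma w ((tau w)^[t] (tau w r)) < sigma w ((tau w)^[t] (tau w r'))) := by
  induction t with
  | zero =>
      intro r r' h
      exact Or.inr ⟨rfl, by simpa [sigma_tau] using h⟩
  | succ t ih =>
      intro r r' h
      rcases key_of_lt h with hlt | ⟨heq, hpos⟩
      · left
        rw [pref_succ, pref_succ]
        exact List.Lex.rel hlt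
      · rcases ih (tau w r) (tau w r') hpos with h1 | ⟨h1, h2⟩
        · left
          rw [pref_succ, pref_succ, heq]
          exact List.Lex.cons h1
        · right
          constructor
          · rw [pref_succ, pref_succ, heq, h1]
          · simpa [Function.iterate_succ_apply] using h2

theorem pref_le_of_sigma_lt {w : List α} {i i' : Fin w.length}
    (h : sigma w i < sigma w i') (t : ℕ) : pref w t i ≤ pref w t i' := by
  have := main_lemma w t (sigma w i) (sigma w i') h
  rw [tau_sigma, tau_sigma] at this
  rcases this with h1 | ⟨h1, _⟩
  · exact le_of_lt h1
  · exact le_of_eq h1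

theorem residual_of_pref_eq {w : List α} {i i' : Fin w.length}
    (h : sigma w i < sigma w i') (t : ℕ) (he : pref w t i = pref w t i') :
    sigma w ((tau w)^[t] i) < sigma w ((tau w)^[t] i') := by
  have := main_lemma w t (sigma w i) (sigma w i') h
  rw [tau_sigma, tau_sigma] at this
  rcases this with h1 | ⟨_, h2⟩
  · rw [he] at h1; exact absurd h1 (lt_irrefl _)
  · exact h2

end Main

section Period
variable [LinearOrder α] {w : List α}

theorem no_small_period {i : Fin w.length} {m d : ℕ} (hm : 0 < m)
    (hper : (tau w)^[m] i = i) (hd : 0 < d)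
    (hpref : pref w m i = pref w m ((tau w)^[d] i))
    (hσ : sigma w i < sigma w ((tau w)^[d] i)) : False := by
  set i' := (tau w)^[d] i with hi'
  have hper' : (tau w)^[m] i' = i' := by
    rw [hi', ← Function.iterate_add_apply, Nat.add_comm, Function.iterate_add_apply, hper]
  -- all letters along the orbits agree
  have hlet : ∀ s, w.get ((tau w)^[s] i) = w.get ((tau w)^[s] i') := by
    intro s
    have h1 : ∀ s' , s' < m → w.get ((tau w)^[s'] i) = w.get ((tau w)^[s'] i') := by
      intro s' hs'
      have := congrArg (fun l => l[s']?) hpref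
      simp only [pref, List.getElem?_map, List.getElem?_range, hs'] at this
      simpa using this
    have hmod : s % m < m := Nat.mod_lt _ hm
    have e1 : (tau w)^[s] i = (tau w)^[s % m] i :=
      (Function.IsPeriodicPt.iterate_mod_apply hper s).symm
    have e2 : (tau w)^[s] i' = (tau w)^[s % m] i' :=
      (Function.IsPeriodicPt.iterate_mod_apply hper' s).symm
    rw [e1, e2]
    exact h1 _ hmod
  have hpref_all : ∀ t, pref w t i = pref w t i' := by
    intro t
    unfold pref
    exact List.map_congr_left (fun s _ => hlet s)
  have hres : ∀ t, sigma w ((tau w)^[t] i) < sigma w ((tau w)^[t] i') :=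
    fun t => residual_of_pref_eq hσ t (hpref_all t)
  have hpos : ∀ t, (tau w)^[t] i < (tau w)^[t] i' := by
    intro t
    have := hres (t+1)
    rwa [Function.iterate_succ_apply', Function.iterate_succ_apply',
      sigma_tau, sigma_tau] at this
  have hmono : StrictMono (fun k => (((tau w)^[k*d] i : Fin w.length) : ℕ)) := by
    apply strictMono_nat_of_lt_succ
    intro k
    have h1 := hpos (k*d)
    have h2 : (tau w)^[k*d] i' = (tau w)^[(k+1)*d] i := by
      rw [hi', ← Function.iterate_add_apply]
      congr 1
      ring
    rw [h2] at h1
    exact h1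
  have hfix : (tau w)^[m*d] i = i := by
    rw [Function.iterate_mul]
    exact Function.IsFixedPt.iterate hper d
  have := hmono (show 0 < m from hm)
  simp only [Nat.zero_mul, Function.iterate_zero_apply, hfix] at this
  exact absurd this (lt_irrefl _)

theorem eq_of_pref_eq_orbit {i : Fin w.length} {m : ℕ} (hm : 0 < m)
    (hper : (tau w)^[m] i = i) (d : ℕ) (hdm : d < m)
    (hpref : pref w m i = pref w m ((tau w)^[d] i)) : (tau w)^[d] i = i := by
  by_contra hne
  have hd0 : 0 < d := by
    rcases Nat.eq_zero_or_pos d with h | h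
    · subst h; exact absurd rfl hne
    · exact h
  have hσne : sigma w i ≠ sigma w ((tau w)^[d] i) := by
    intro he
    exact hne (sigma_injective w he).symm
  rcases lt_or_gt_of_ne hσne with hσ | hσ
  · exact no_small_period hm hper hd0 hpref hσ
  · -- apply with i' and m - d
    have hper' : (tau w)^[m] ((tau w)^[d] i) = (tau w)^[d] i := by
      rw [← Function.iterate_add_apply, Nat.add_comm, Function.iterate_add_apply, hper]
    have he2 : (tau w)^[m-d] ((tau w)^[d] i) = i := by
      rw [← Function.iterate_add_apply, Nat.sub_add_cancel (le_of_lt hdm), hper]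
    have hd2 : 0 < m - d := Nat.sub_pos_of_lt hdm
    apply no_small_period hm hper' hd2 (d := m - d)
    · rw [he2]; exact hpref.symm
    · rw [he2]; exact hσ

end Period

section Final

variable [LinearOrder α] {w : List α}

theorem mem_periodicPts_tau (j : Fin w.length) : j ∈ Function.periodicPts (tau w) := by
  obtain ⟨a, b, hab, he⟩ :=
    Finite.exists_ne_map_eq_of_infinite (fun k : ℕ => (tau w)^[k] j)
  rcases hab.lt_or_gt with h | h
  · have : (tau w)^[a] ((tau w)^[b-a] j) = (tau w)^[a] j := by
      rw [← Function.iterate_add_apply, Nat.add_sub_cancel' (le_of_lt h)]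
      exact he.symm
    have hp : (tau w)^[b-a] j = j := ((tau_injective w).iterate a) this
    exact Function.mk_mem_periodicPts (Nat.sub_pos_of_lt h) hp
  · have : (tau w)^[b] ((tau w)^[a-b] j) = (tau w)^[b] j := by
      rw [← Function.iterate_add_apply, Nat.add_sub_cancel' (le_of_lt h)]
      exact he
    have hp : (tau w)^[a-b] j = j := ((tau_injective w).iterate b) this
    exact Function.mk_mem_periodicPts (Nat.sub_pos_of_lt h) hp

theorem cycleWord_eq_pref (j : Fin w.length) :
    cycleWord w j = pref w (Function.minimalPeriod (tau w) j) j := rfl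

theorem rotate_pref {j : Fin w.length} {m : ℕ} (hm : 0 < m)
    (hper : (tau w)^[m] j = j) (t : ℕ) :
    (pref w m j).rotate t = pref w m ((tau w)^[t] j) := by
  apply List.ext_getElem
  · simp [length_pref]
  · intro k h1 h2
    have hk : k < m := by simpa [length_pref] using h2
    have hlen : (pref w m j).length = m := length_pref w m j
    rw [List.getElem_rotate, getElem_pref _ _ _ _ (by rw [hlen]; exact Nat.mod_lt _ hm)]
    · rw [getElem_pref _ _ _ _ hk, ← Function.iterate_add_apply, hlen]
      congr 1
      exact (Function.IsPeriodicPt.iterate_mod_apply hper (k+t))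

end Final

section Final2
variable [LinearOrder α] {w : List α}

theorem filterMap_getLast?_eq_map (a : α) :
    ∀ (L : List (List α)), (∀ x ∈ L, x ≠ []) →
      L.filterMap List.getLast? = L.map (fun x => x.getLastD a)
  | [], _ => rfl
  | x :: L, h => by
      have hx : x ≠ [] := h x (by simp)
      obtain ⟨y, hy⟩ := Option.isSome_iff_exists.mp (List.getLast?_isSome.mpr hx)
      rw [List.filterMap_cons, hy, List.map_cons,
        filterMap_getLast?_eq_map a L (fun z hz => h z (by simp [hz]))]
      congr 1
      rw [List.getLastD_eq_getLast?, hy]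
      rfl

theorem getLastD_pref {m : ℕ} (hm : 0 < m) (i : Fin w.length) (a : α) :
    (pref w m i).getLastD a = w.get ((tau w)^[m-1] i) := by
  have hne : pref w m i ≠ [] := by
    intro h
    have := congrArg List.length h
    simp [length_pref] at this
    omega
  rw [List.getLastD_eq_getLast?, List.getLast?_eq_getLast hne]
  simp only [Option.getD_some]
  rw [List.getLast_eq_getElem]
  have h1 : (pref w m i).length = m := length_pref w m i
  simp only [h1]
  rw [getElem_pref w m i (m-1) (by omega)]

end Final2

section Final3
variable [LinearOrder α] {w : List α}

theorem iterate_period_orbit {j : Fin w.length} {m : ℕ}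
    (hper : (tau w)^[m] j = j) (t : ℕ) :
    (tau w)^[m] ((tau w)^[t] j) = (tau w)^[t] j := by
  rw [← Function.iterate_add_apply, Nat.add_comm, Function.iterate_add_apply, hper]

theorem orbit_pref_eq {j : Fin w.length} {m : ℕ} (hm : 0 < m)
    (hper : (tau w)^[m] j = j) {t t' : ℕ} (ht : t < m) (ht' : t' < m)
    (h : pref w m ((tau w)^[t] j) = pref w m ((tau w)^[t'] j)) :
    (tau w)^[t] j = (tau w)^[t'] j := by
  rcases le_total t t' with hle | hle
  · have hiter : (tau w)^[t'-t] ((tau w)^[t] j) = (tau w)^[t'] j := by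
      rw [← Function.iterate_add_apply, Nat.sub_add_cancel hle]
    have := eq_of_pref_eq_orbit hm (iterate_period_orbit hper t) (t'-t)
      (by omega) (by rw [hiter]; exact h)
    rw [hiter] at this
    exact this.symm
  · have hiter : (tau w)^[t-t'] ((tau w)^[t'] j) = (tau w)^[t] j := by
      rw [← Function.iterate_add_apply, Nat.sub_add_cancel hle]
    have := eq_of_pref_eq_orbit hm (iterate_period_orbit hper t') (t-t')
      (by omega) (by rw [hiter]; exact h.symm)
    rw [hiter] at this
    exact this

end Final3


theorem stmt11 [LinearOrder α] (w : List α) (hw : List.Chain' (· ≥ ·) w)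
    (j : Fin w.length) :
    PerfectlyClustering (cycleWord w j) := by
  set m := Function.minimalPeriod (tau w) j with hmdef
  have hm : 0 < m :=
    Function.minimalPeriod_pos_of_mem_periodicPts (mem_periodicPts_tau j)
  have hper : (tau w)^[m] j = j := Function.iterate_minimalPeriod
  have hv : cycleWord w j = pref w m j := rfl
  have hvlen : (cycleWord w j).length = m := by rw [hv, length_pref]
  constructor
  · -- primitivity
    constructor
    · intro h
      rw [h] at hvlen
      simp at hvlen
      omega
    · intro u k hk
      have hlen : m = k * u.length := by
        rw [← hvlen, hk]
        simp [List.length_flatten, List.map_replicate, List.sum_replicate, smul_eq_mul]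
      by_contra hk1
      have hk0 : k ≠ 0 := by rintro rfl; simp at hlen; omega
      have hk2 : 2 ≤ k := by omega
      set d := u.length with hddef
      have hd0 : 0 < d := by
        rcases Nat.eq_zero_or_pos d with h | h
        · rw [h] at hlen; omega
        · exact h
      have hdm : d < m := by
        have : 2 * d ≤ k * d := Nat.mul_le_mul_right d hk2
        omega
      -- rotation by d fixes the cycle word
      have hsplit : cycleWord w j = u ++ (List.replicate (k-1) u).flatten := by
        rw [hk]
        have : k = (k-1) + 1 := by omega
        rw [this, List.replicate_succ, List.flatten_cons]
        simp
      have hrot : (cycleWord w j).rotate d = cycleWord w j := by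
        rw [hsplit]
        rw [List.rotate_eq_drop_append_take (by simp; omega)]
        rw [show d = u.length from rfl, List.drop_left, List.take_left]
        have h1 : List.replicate (k-1) u ++ [u] = u :: List.replicate (k-1) u := by
          rw [← List.replicate_succ, ← List.replicate_succ']
        calc (List.replicate (k-1) u).flatten ++ u
            = (List.replicate (k-1) u ++ [u]).flatten := by simp
          _ = (u :: List.replicate (k-1) u).flatten := by rw [h1]
          _ = u ++ (List.replicate (k-1) u).flatten := by rw [List.flatten_cons]
      have hpe : pref w m j = pref w m ((tau w)^[d] j) := by
        rw [← rotate_pref hm hper d, ← hv, hrot, hv]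
      have := eq_of_pref_eq_orbit hm hper d hdm hpe
      exact Function.not_isPeriodicPt_of_pos_of_lt_minimalPeriod
        (by omega) (by omega) this
  · -- BWT is weakly decreasing
    have hwpair : List.Pairwise (· ≥ ·) w := List.isChain_iff_pairwise.mp hw
    have hwget : ∀ a b : Fin w.length, a < b → w.get a ≥ w.get b := by
      intro a b hab
      exact List.pairwise_iff_get.mp hwpair a b hab
    set a₀ := w.get j with ha₀
    set L := List.insertionSort (· ≤ ·) (rotations (cycleWord w j)) with hL
    have hmemL : ∀ x ∈ L, ∃ t, t < m ∧ x = pref w m ((tau w)^[t] j) := by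
      intro x hx
      have : x ∈ rotations (cycleWord w j) :=
        (List.perm_insertionSort _ _).mem_iff.mp hx
      rw [rotations] at this
      obtain ⟨t, ht, rfl⟩ := List.mem_map.mp this
      rw [List.mem_range, hvlen] at ht
      exact ⟨t, ht, by rw [hv, rotate_pref hm hper]⟩
    have hneL : ∀ x ∈ L, x ≠ [] := by
      intro x hx h
      obtain ⟨t, ht, hxe⟩ := hmemL x hx
      rw [h] at hxe
      have := congrArg List.length hxe
      simp [length_pref] at this
      omega
    show List.Chain' (· ≥ ·) (BWT (cycleWord w j))
    rw [BWT, ← hL, filterMap_getLast?_eq_map a₀ L hneL]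
    unfold List.Chain'
    rw [List.isChain_map]
    apply List.Pairwise.isChain
    have hsorted : L.Pairwise (· ≤ ·) := List.pairwise_insertionSort _ _
    refine hsorted.imp_of_mem ?_
    intro x y hx hy hxy
    obtain ⟨t, ht, rfl⟩ := hmemL x hx
    obtain ⟨t', ht', rfl⟩ := hmemL y hy
    set i := (tau w)^[t] j with hi
    set i' := (tau w)^[t'] j with hi'
    have hperi : (tau w)^[m] i = i := iterate_period_orbit hper t
    have hperi' : (tau w)^[m] i' = i' := iterate_period_orbit hper t'
    have hsig : ∀ x : Fin w.length, (tau w)^[m] x = x →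
        (tau w)^[m-1] x = sigma w x := by
      intro x hx
      have h1 : tau w ((tau w)^[m-1] x) = x := by
        have h2 := Function.iterate_succ_apply' (tau w) (m-1) x
        rw [show (m-1).succ = m by omega] at h2
        rw [← h2]
        exact hx
      conv_rhs => rw [← h1]
      rw [sigma_tau]
    rw [getLastD_pref hm i a₀, getLastD_pref hm i' a₀, hsig i hperi, hsig i' hperi']
    by_cases hxy2 : pref w m i = pref w m i'
    · have : i = i' := orbit_pref_eq hm hper ht ht' hxy2
      rw [this]
    · have hlt : pref w m i < pref w m i' := lt_of_le_of_ne hxy hxy2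
      have hii : i ≠ i' := fun h => hxy2 (by rw [h])
      have hsne : sigma w i ≠ sigma w i' := fun h => hii (sigma_injective w h)
      rcases lt_or_gt_of_ne hsne with hs | hs
      · exact hwget _ _ hs
      · have := pref_le_of_sigma_lt hs m
        exact absurd (lt_of_lt_of_le hlt this) (lt_irrefl _)
end

section
/- Every perfectly clustering word over a two-element ordered alphabet with a coprime number p of occurrences of the first letter and q of the second exists and is unique up to conjugacy; equivalently, for each pair (p,q) of nonnegative integers, there exists a perfectly clustering word with exactly p occurrences of x and q occurrences of y if and only if gcd(p,q) = 1. -/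
variable {α : Type*}

theorem List.eq_of_perm_of_sorted {r : α → α → Prop} [Std.Antisymm r] {l₁ l₂ : List α}
    (hp : l₁.Perm l₂) (hs₁ : l₁.Pairwise r) (hs₂ : l₂.Pairwise r) : l₁ = l₂ :=
  hp.eq_of_pairwise' hs₁ hs₂

namespace PCW
open List


lemma list_lt_iff {l l' : List Bool} : l < l' ↔ List.Lex (· < ·) l l' := Iff.rfl

lemma cons_lt_cons_iff {a : Bool} {l l' : List Bool} : (a :: l) < (a :: l') ↔ l < l' :=
  List.lex_cons_iff

lemma cons_le_cons {a : Bool} {l l' : List Bool} (h : l ≤ l') : (a :: l) ≤ (a :: l') := by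
  rcases lt_or_eq_of_le h with h | rfl
  · exact le_of_lt (List.Lex.cons h)
  · exact le_rfl

lemma head_lt {a b : Bool} {l l' : List Bool} (h : a < b) : (a :: l) < (b :: l') :=
  List.Lex.rel h

lemma head_le_of_le {a b : Bool} {l l' : List Bool} (h : (a :: l) ≤ (b :: l')) : a ≤ b := by
  rcases lt_or_eq_of_le h with h' | h'
  · exact List.head_le_of_lt h'
  · cases h'; exact le_rfl

lemma lex_append_singleton (a : Bool) :
    ∀ (l l' : List Bool), l.length = l'.length → ((l ++ [a]) < (l' ++ [a]) ↔ l < l')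
  | [], [], _ => by
    constructor
    · intro h; exact absurd le_rfl (not_le_of_gt h)
    · intro h; exact absurd le_rfl (not_le_of_gt h)
  | [], (b :: l'), h => by simp at h
  | (b :: l), [], h => by simp at h
  | (x :: l), (y :: l'), h => by
    rcases lt_trichotomy x y with hxy | rfl | hxy
    · simp only [List.cons_append]
      constructor <;> intro <;> exact head_lt hxy
    · simp only [List.cons_append, cons_lt_cons_iff]
      exact lex_append_singleton a l l' (by simpa using h)
    · constructor <;> intro hc
      · exact absurd (head_le_of_le (le_of_lt hc)) (not_le_of_gt hxy)
      · exact absurd (head_le_of_le (le_of_lt hc)) (not_le_of_gt hxy)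


lemma head!_eq_getElem (l : List Bool) (h : l ≠ []) :
    l.head! = l[0]'(List.length_pos_iff.mpr h) := by
  cases l with
  | nil => exact absurd rfl h
  | cons a l => rfl

lemma getLast!_eq_getElem (l : List Bool) (h : l ≠ []) :
    l.getLast! = l[l.length - 1]'(by have := List.length_pos_iff.mpr h; omega) := by
  rw [List.getLast!_of_getLast? (List.getLast?_eq_getLast h), List.getLast_eq_getElem]

lemma filterMap_getLast?_eq_map (L : List (List Bool)) (hL : ∀ x ∈ L, x ≠ []) :
    L.filterMap List.getLast? = L.map List.getLast! := by
  induction L with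
  | nil => rfl
  | cons a L ih =>
    rw [List.filterMap_cons, List.map_cons,
      List.getLast?_eq_getLast (hL a (by simp)), ← ih (fun x hx => hL x (by simp [hx]))]
    rw [List.getLast!_of_getLast? (List.getLast?_eq_getLast (hL a (by simp)))]


variable {w : List Bool}

lemma length_rotations : (rotations w).length = w.length := by
  simp [rotations]

lemma getElem_rotations (i : ℕ) (h : i < (rotations w).length) :
    (rotations w)[i] = w.rotate i := by
  simp [rotations]

lemma mem_rotations {x : List Bool} :
    x ∈ rotations w ↔ ∃ i, i < w.length ∧ x = w.rotate i := by
  simp [rotations, List.mem_range, eq_comm]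

lemma rotate_mem_rotations (hw : w ≠ []) (i : ℕ) : w.rotate i ∈ rotations w := by
  rw [mem_rotations]
  exact ⟨i % w.length, Nat.mod_lt _ (List.length_pos_iff.mpr hw), (List.rotate_mod w i).symm⟩

lemma ne_nil_of_mem_rotations (hw : w ≠ []) {x : List Bool} (hx : x ∈ rotations w) : x ≠ [] := by
  rcases mem_rotations.mp hx with ⟨i, _, rfl⟩
  simpa using hw

lemma length_of_mem_rotations {x : List Bool} (hx : x ∈ rotations w) : x.length = w.length := by
  rcases mem_rotations.mp hx with ⟨i, _, rfl⟩
  simp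

lemma map_head!_rotations : (rotations w).map List.head! = w := by
  apply List.ext_getElem
  · simp [rotations]
  · intro i h1 h2
    simp only [List.getElem_map, getElem_rotations, length_rotations] at *
    rw [head!_eq_getElem _ (by simp only [← List.length_pos_iff, List.length_rotate]; omega)]
    simp only [List.getElem_rotate]
    congr 1
    rw [Nat.zero_add, Nat.mod_eq_of_lt h2]

lemma map_getLast!_rotations (hw : w ≠ []) :
    (rotations w).map List.getLast! = w.rotate (w.length - 1) := by
  apply List.ext_getElem
  · simp [rotations]
  · intro i h1 h2
    simp only [List.getElem_map, getElem_rotations, length_rotations] at *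
    rw [getLast!_eq_getElem _ (by simpa using hw)]
    simp only [List.getElem_rotate, List.length_rotate]
    congr 1
    rw [Nat.add_comm]

lemma sort_rotations_perm : List.insertionSort (· ≤ ·) (rotations w) ~ rotations w :=
  List.perm_insertionSort _ _

lemma BWT_eq_map (hw : w ≠ []) :
    BWT w = (List.insertionSort (· ≤ ·) (rotations w)).map List.getLast! := by
  apply filterMap_getLast?_eq_map
  intro x hx
  exact ne_nil_of_mem_rotations hw (sort_rotations_perm.mem_iff.mp hx)

lemma BWT_perm (hw : w ≠ []) : BWT w ~ w := by
  rw [BWT_eq_map hw]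
  calc (List.insertionSort (· ≤ ·) (rotations w)).map List.getLast!
      ~ (rotations w).map List.getLast! := (sort_rotations_perm).map _
    _ = w.rotate (w.length - 1) := map_getLast!_rotations hw
    _ ~ w := List.rotate_perm w _


lemma length_eq_counts (l : List Bool) : l.length = l.count false + l.count true := by
  induction l with
  | nil => rfl
  | cons a l ih =>
    cases a <;>
      simp only [List.length_cons, List.count_cons, ih] <;> simp <;> omega

lemma getElem_rep_rep (a b : Bool) (m k i : ℕ) (h : i < (List.replicate m a ++ List.replicate k b).length) :
    (List.replicate m a ++ List.replicate k b)[i] = if i < m then a else b := by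
  have hl : (List.replicate m a ++ List.replicate k b).length = m + k := by simp
  rcases lt_or_ge i m with hi | hi
  · rw [List.getElem_append_left (by simpa using hi), List.getElem_replicate, if_pos hi]
  · rw [List.getElem_append_right (by simpa using hi), List.getElem_replicate, if_neg (by omega)]

lemma perm_rep_rep (l : List Bool) (a b : Bool) (hab : a ≠ b) :
    l ~ List.replicate (l.count a) a ++ List.replicate (l.count b) b := by
  rw [List.perm_iff_count]
  intro c
  cases a <;> cases b <;> cases c <;>
    simp_all [List.count_append, List.count_replicate]

lemma sorted_ge_rep_rep (m k : ℕ) :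
    List.Pairwise (· ≥ ·) (List.replicate m true ++ List.replicate k false) := by
  rw [List.pairwise_append]
  refine ⟨List.pairwise_replicate.mpr (by simp), List.pairwise_replicate.mpr (by simp), ?_⟩
  intro x hx y hy
  simp_all [List.eq_of_mem_replicate hx, List.eq_of_mem_replicate hy]

lemma sorted_le_rep_rep (m k : ℕ) :
    List.Pairwise (· ≤ ·) (List.replicate m false ++ List.replicate k true) := by
  rw [List.pairwise_append]
  refine ⟨List.pairwise_replicate.mpr (by simp), List.pairwise_replicate.mpr (by simp), ?_⟩
  intro x hx y hy
  simp_all [List.eq_of_mem_replicate hx, List.eq_of_mem_replicate hy]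

lemma desc_eq {l : List Bool} (h : List.Chain' (· ≥ ·) l) :
    l = List.replicate (l.count true) true ++ List.replicate (l.count false) false := by
  have hs : List.Pairwise (· ≥ ·) l := List.isChain_iff_pairwise.mp h
  exact List.eq_of_perm_of_sorted (perm_rep_rep l true false (by simp)) hs
    (sorted_ge_rep_rep _ _)

lemma asc_eq {l : List Bool} (h : List.Pairwise (· ≤ ·) l) :
    l = List.replicate (l.count false) false ++ List.replicate (l.count true) true :=
  List.eq_of_perm_of_sorted (perm_rep_rep l false true (by simp)) h (sorted_le_rep_rep _ _)

lemma chain'_ge_rep_rep (m k : ℕ) :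
    List.Chain' (· ≥ ·) (List.replicate m true ++ List.replicate k false) :=
  List.isChain_iff_pairwise.mpr (sorted_ge_rep_rep m k)


lemma pow_of_rotate (d : ℕ) (hd : 0 < d) :
    ∀ (m : ℕ) (w : List Bool), w.length = m → d ∣ m → w.rotate d = w →
      w = (List.replicate (m / d) (w.take d)).flatten := by
  intro m
  induction m using Nat.strong_induction_on with
  | _ m ih =>
    intro w hlen hdvd hrot
    rcases Nat.eq_zero_or_pos m with rfl | hm
    · rw [List.length_eq_zero_iff] at hlen
      subst hlen
      simp
    have hdm : d ≤ m := Nat.le_of_dvd hm hdvd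
    have hdw : d ≤ w.length := by omega
    have htake : (w.take d).length = d := by simp [hlen]; omega
    have hsplit : w.take d ++ w.drop d = w := List.take_append_drop d w
    have hc : w.drop d ++ w.take d = w := by
      rw [← List.rotate_eq_drop_append_take hdw, hrot]
    rcases eq_or_lt_of_le hdm with heq | hlt
    · -- m = d : w = take d w
      have hr : w.drop d = [] := by
        have : (w.drop d).length = 0 := by simp [hlen, ← heq]
        exact List.length_eq_zero_iff.mp this
      have hw : w = w.take d := by
        conv_lhs => rw [← hsplit]
        rw [hr, List.append_nil]
      have hmd : m / d = 1 := by rw [← heq, Nat.div_self hd]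
      rw [hmd, List.replicate_one, List.flatten_cons, List.flatten_nil, List.append_nil]
      exact hw
    · -- m > d
      set t := w.take d with ht
      set r := w.drop d with hr
      have hrlen : r.length = m - d := by simp [hr, hlen]
      have hdvd' : d ∣ m - d := (Nat.dvd_sub hdvd dvd_rfl)
      have hrd : d ≤ m - d := Nat.le_of_dvd (by omega) hdvd'
      have hcomm : t ++ r = r ++ t := by rw [hsplit, hc]
      have htr : r.take d = t := by
        have h1 : (t ++ r).take d = t := List.take_left' htake
        have h2 : (r ++ t).take d = r.take d := List.take_append_of_le_length (by omega)
        rw [← h2, ← hcomm, h1]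
      have hdr : r.drop d ++ t = r := by
        have h1 : (t ++ r).drop d = r := List.drop_left' htake
        have h2 : (r ++ t).drop d = r.drop d ++ t := List.drop_append_of_le_length (by omega)
        rw [← h2, ← hcomm, h1]
      have hrrot : r.rotate d = r := by
        rw [List.rotate_eq_drop_append_take (by omega), htr, hdr]
      have hIH := ih (m - d) (by omega) r hrlen hdvd' hrrot
      rw [htr] at hIH
      have hdivs : m / d = (m - d) / d + 1 := by
        obtain ⟨s, rfl⟩ := hdvd
        have hs : 1 ≤ s := by
          rcases Nat.eq_zero_or_pos s with rfl | h; · omega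
          · exact h
        rw [Nat.mul_div_cancel_left s hd]
        have : d * s - d = d * (s - 1) := by
          rw [Nat.mul_sub]; omega
        rw [this, Nat.mul_div_cancel_left _ hd]
        omega
      rw [hdivs, List.replicate_succ, List.flatten_cons, ← hIH, hsplit]

lemma rotate_of_pow (w u : List Bool) (k : ℕ) (hk : 0 < k)
    (h : w = (List.replicate k u).flatten) : w.rotate u.length = w := by
  have hrep : List.replicate k u = u :: List.replicate (k-1) u := by
    rw [← List.replicate_succ]; congr 1; omega
  have hrep' : List.replicate k u = List.replicate (k-1) u ++ [u] := by
    conv_lhs => rw [show k = (k-1)+1 by omega]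
    rw [List.replicate_succ']
  have hw1 : w = u ++ (List.replicate (k-1) u).flatten := by
    rw [h, hrep, List.flatten_cons]
  have hlen : u.length ≤ w.length := by
    rw [hw1]; simp
  rw [List.rotate_eq_drop_append_take hlen]
  have htk : w.take u.length = u := by rw [hw1, List.take_left]
  have hdp : w.drop u.length = (List.replicate (k-1) u).flatten := by rw [hw1, List.drop_left]
  rw [htk, hdp]
  conv_rhs => rw [h, hrep', List.flatten_append]
  simp

lemma prim_rotate {w : List Bool} (hw : IsPrimitiveWord w) {i : ℕ} (hi : i < w.length)
    (hrot : w.rotate i = w) : i = 0 := by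
  by_contra hne
  have hipos : 0 < i := Nat.pos_of_ne_zero hne
  set n := w.length with hn
  have hnpos : 0 < n := List.length_pos_iff.mpr hw.1
  set g := Nat.gcd i n with hg
  have hgpos : 0 < g := Nat.gcd_pos_of_pos_left _ hipos
  have hgn : g ∣ n := Nat.gcd_dvd_right i n
  have hgi : g ≤ i := Nat.le_of_dvd hipos (Nat.gcd_dvd_left i n)
  -- rotate by any multiple of i fixes w
  have hmul : ∀ k : ℕ, w.rotate (k * i) = w := by
    intro k
    induction k with
    | zero => simp
    | succ k ihk =>
      have : w.rotate (k * i + i) = (w.rotate (k*i)).rotate i := (List.rotate_rotate w _ _).symm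
      rw [Nat.succ_mul, this, ihk, hrot]
  -- find x with x * i ≡ g [MOD n]
  haveI : NeZero n := ⟨by omega⟩
  have key : ∃ x : ℕ, (x * i) % n = g % n := by
    set c : ZMod n := ((Nat.gcdA i n : ℤ) : ZMod n) with hc
    refine ⟨(c.val), ?_⟩
    have h1 : ((c.val * i : ℕ) : ZMod n) = ((g : ℕ) : ZMod n) := by
      rw [Nat.cast_mul, ZMod.natCast_val, ZMod.cast_id]
      have := Nat.gcd_eq_gcd_ab i n
      have h2 : ((Nat.gcd i n : ℤ) : ZMod n) = ((i : ℤ) * Nat.gcdA i n + (n : ℤ) * Nat.gcdB i n : ℤ) := by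
        exact_mod_cast congrArg (fun z : ℤ => (z : ZMod n)) this
      push_cast at h2
      rw [ZMod.natCast_self] at h2
      rw [hg]
      push_cast
      rw [h2]
      ring
    have := (ZMod.natCast_eq_natCast_iff _ _ _).mp h1
    exact this
  obtain ⟨x, hx⟩ := key
  have hrg : w.rotate g = w := by
    rw [← List.rotate_mod, ← hx, List.rotate_mod, hmul x]
  have := pow_of_rotate g hgpos n w rfl hgn hrg
  have h1 := hw.2 _ _ this
  have hng : n = g := by
    obtain ⟨s, hs⟩ := hgn
    rw [hs, Nat.mul_div_cancel_left _ hgpos] at h1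
    rw [hs, h1, Nat.mul_one]
  omega

lemma rotate_injOn_aux {w : List Bool} (hw : IsPrimitiveWord w) {i j : ℕ} (hi : i < w.length)
    (hj : j < w.length) (hij : i ≤ j) (h : w.rotate i = w.rotate j) : i = j := by
  set n := w.length with hn
  have h1 : (w.rotate i).rotate (n - i) = w := by
    rw [List.rotate_rotate, show i + (n - i) = n by omega, List.rotate_length]
  have h2 : (w.rotate j).rotate (n - i) = w.rotate (j - i) := by
    rw [List.rotate_rotate, ← List.rotate_mod, show j + (n - i) = (j - i) + n by omega,
      Nat.add_mod_right, List.rotate_mod]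
  have h3 : w.rotate (j - i) = w := by rw [← h2, ← h, h1]
  have := prim_rotate hw (by omega) h3
  omega

lemma rotate_injOn {w : List Bool} (hw : IsPrimitiveWord w) {i j : ℕ} (hi : i < w.length)
    (hj : j < w.length) (h : w.rotate i = w.rotate j) : i = j := by
  rcases le_total i j with hij | hij
  · exact rotate_injOn_aux hw hi hj hij h
  · exact (rotate_injOn_aux hw hj hi hij h.symm).symm

lemma rotations_nodup {w : List Bool} (hw : IsPrimitiveWord w) : (rotations w).Nodup := by
  refine List.Nodup.map_on ?_ List.nodup_range
  intro i hi j hj h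
  exact rotate_injOn hw (List.mem_range.mp hi) (List.mem_range.mp hj) h


lemma mul_mod_inj_aux {q n : ℕ} (hcop : Nat.gcd q n = 1) {k k' : ℕ} (hk' : k' < n)
    (hle : k ≤ k') (h : k * q % n = k' * q % n) : k = k' := by
  have hmod : k * q ≡ k' * q [MOD n] := h
  have hdvd : n ∣ k' * q - k * q := (Nat.modEq_iff_dvd' (Nat.mul_le_mul_right _ hle)).mp hmod
  rw [← Nat.sub_mul] at hdvd
  have hc : n ∣ k' - k := (Nat.Coprime.symm hcop).dvd_of_dvd_mul_right hdvd
  rcases Nat.eq_zero_or_pos (k' - k) with h0 | hpos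
  · omega
  · have := Nat.le_of_dvd hpos hc
    omega

lemma mul_mod_inj {q n : ℕ} (hcop : Nat.gcd q n = 1) {k k' : ℕ} (hk : k < n) (hk' : k' < n)
    (h : k * q % n = k' * q % n) : k = k' := by
  rcases le_total k k' with hle | hle
  · exact mul_mod_inj_aux hcop hk' hle h
  · exact (mul_mod_inj_aux hcop hk hle h.symm).symm

lemma mul_mod_surj {q n : ℕ} (hn : 0 < n) (hcop : Nat.gcd q n = 1) (t : ℕ) (ht : t < n) :
    ∃ k, k < n ∧ k * q % n = t := by
  have hinj : Function.Injective (fun k : Fin n => (⟨k.1 * q % n, Nat.mod_lt _ hn⟩ : Fin n)) := by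
    intro a b hab
    exact Fin.ext (mul_mod_inj hcop a.2 b.2 (congrArg Fin.val hab))
  have hsurj := Finite.surjective_of_injective hinj
  obtain ⟨k, hk⟩ := hsurj ⟨t, ht⟩
  exact ⟨k.1, k.2, congrArg Fin.val hk⟩

lemma gcd_of_inj {q n : ℕ} (hn : 0 < n)
    (hinj : ∀ k k', k < n → k' < n → k * q % n = k' * q % n → k = k') : Nat.gcd q n = 1 := by
  set g := Nat.gcd q n with hg
  have hgn : g ∣ n := Nat.gcd_dvd_right q n
  have hgq : g ∣ q := Nat.gcd_dvd_left q n
  have hgpos : 0 < g := Nat.gcd_pos_of_pos_right _ hn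
  by_contra hne
  have hge2 : 2 ≤ g := by omega
  obtain ⟨m, hm⟩ := hgn
  obtain ⟨s, hs⟩ := hgq
  have hmpos : 0 < m := by
    rcases Nat.eq_zero_or_pos m with rfl | h
    · omega
    · exact h
  have hmn : m < n := by
    calc m < 2 * m := by omega
      _ ≤ g * m := Nat.mul_le_mul_right m hge2
      _ = n := hm.symm
  have hzero : m * q % n = 0 * q % n := by
    rw [Nat.zero_mul, Nat.zero_mod, hs, hm, show m * (g * s) = (g * m) * s by ring,
      Nat.mul_mod_right]
  exact absurd (hinj m 0 hmn hn hzero) (by omega)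


def Wrow (p q m j : ℕ) : List Bool :=
  (List.range m).map (fun k => decide (p ≤ (k * q + j) % (p + q)))

lemma Wrow_length (p q m j : ℕ) : (Wrow p q m j).length = m := by simp [Wrow]

lemma Wrow_getElem (p q m j k : ℕ) (h : k < (Wrow p q m j).length) :
    (Wrow p q m j)[k] = decide (p ≤ (k * q + j) % (p + q)) := by
  simp [Wrow]

lemma Wrow_succ (p q m j : ℕ) :
    Wrow p q (m+1) j = decide (p ≤ j % (p + q)) :: Wrow p q m ((j + q) % (p + q)) := by
  unfold Wrow
  rw [List.range_succ_eq_map, List.map_cons, List.map_map]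
  congr 1
  · simp
  · apply List.map_congr_left
    intro k _
    simp only [Function.comp_apply]
    congr 1
    have h1 : (Nat.succ k) * q + j = k * q + (j + q) := by rw [Nat.succ_mul]; ring
    rw [h1, ← Nat.add_mod_mod]

lemma Wrow_mono (p q : ℕ) : ∀ (m j j' : ℕ), j < j' → j' < p + q →
    Wrow p q m j ≤ Wrow p q m j' := by
  intro m
  induction m with
  | zero => intro j j' _ _; exact le_rfl
  | succ m ih =>
    intro j j' hjj hj'
    set n := p + q with hn
    rw [Wrow_succ, Wrow_succ]
    rw [Nat.mod_eq_of_lt (by omega : j < n), Nat.mod_eq_of_lt hj']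
    rcases lt_or_ge j' p with hj'p | hj'p
    · -- both heads false
      rw [decide_eq_false (by omega), decide_eq_false (by omega)]
      apply cons_le_cons
      rw [Nat.mod_eq_of_lt (by omega : j + q < n), Nat.mod_eq_of_lt (by omega : j' + q < n)]
      exact ih (j + q) (j' + q) (by omega) (by omega)
    · rcases lt_or_ge j p with hjp | hjp
      · -- mixed
        rw [decide_eq_false (by omega), decide_eq_true (by omega)]
        exact le_of_lt (head_lt (by simp))
      · -- both heads true
        rw [decide_eq_true (by omega : p ≤ j), decide_eq_true (by omega : p ≤ j')]
        apply cons_le_cons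
        have e1 : (j + q) % n = j - p := by
          rw [Nat.mod_eq_sub_mod (by omega), show j + q - n = j - p by omega,
            Nat.mod_eq_of_lt (by omega)]
        have e2 : (j' + q) % n = j' - p := by
          rw [Nat.mod_eq_sub_mod (by omega), show j' + q - n = j' - p by omega,
            Nat.mod_eq_of_lt (by omega)]
        rw [e1, e2]
        exact ih _ _ (by omega) (by omega)

lemma Wrow_rotate (p q : ℕ) (hn : 0 < p + q) (j i : ℕ) :
    (Wrow p q (p+q) j).rotate i = Wrow p q (p+q) ((i * q + j) % (p + q)) := by
  set n := p + q with hn'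
  apply List.ext_getElem
  · simp [Wrow_length]
  · intro k h1 h2
    rw [List.getElem_rotate]
    rw [Wrow_getElem, Wrow_getElem]
    congr 1
    rw [Wrow_length] at h2
    have hlen : (Wrow p q n j).length = n := Wrow_length p q n j
    simp only [hlen]
    have e1 : ((k + i) % n * q + j) % n = ((k + i) * q + j) % n :=
      Nat.ModEq.add_right j (Nat.ModEq.mul_right q (Nat.mod_modEq (k+i) n))
    have e2 : (k * q + (i * q + j) % n) % n = ((k + i) * q + j) % n := by
      rw [Nat.add_mod_mod]
      congr 1
      ring
    rw [e1, e2]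

lemma Wrow_ne (p q : ℕ) (hcop : Nat.gcd q (p + q) = 1) {j j' : ℕ} (hjj : j < j')
    (hj' : j' < p + q) : Wrow p q (p+q) j ≠ Wrow p q (p+q) j' := by
  set n := p + q with hn'
  have hn : 0 < n := by omega
  have hn2 : 2 ≤ n := by omega
  have hp : 1 ≤ p := by
    by_contra h
    have hp0 : p = 0 := by omega
    rw [hn', hp0, Nat.zero_add, Nat.gcd_self] at hcop
    omega
  have hq : 1 ≤ q := by
    by_contra h
    have hq0 : q = 0 := by omega
    rw [hq0, Nat.gcd_zero_left] at hcop
    omega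
  set d := j' - j with hd
  set a := if d < q then p - 1 else n - d - 1 with ha
  have hap : a < p := by
    rw [ha]; split <;> omega
  have hapd : p ≤ a + d := by
    rw [ha]; split <;> omega
  have hadn : a + d < n := by
    rw [ha]; split <;> omega
  obtain ⟨k, hk, hkt⟩ := mul_mod_surj hn hcop ((a + n - j) % n) (Nat.mod_lt _ hn)
  have e1 : (k * q + j) % n = a := by
    rw [← Nat.mod_add_mod, hkt, Nat.mod_add_mod, show a + n - j + j = a + n by omega,
      Nat.add_mod_right, Nat.mod_eq_of_lt (by omega)]
  have e2 : (k * q + j') % n = a + d := by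
    rw [← Nat.mod_add_mod, hkt, Nat.mod_add_mod, show a + n - j + j' = a + d + n by omega,
      Nat.add_mod_right, Nat.mod_eq_of_lt (by omega)]
  intro heq
  have h1 : k < (Wrow p q n j).length := by rw [Wrow_length]; exact hk
  have h2 : k < (Wrow p q n j').length := by rw [Wrow_length]; exact hk
  have := congrArg (fun l : List Bool => l[k]?) heq
  simp only [List.getElem?_eq_getElem h1, List.getElem?_eq_getElem h2] at this
  rw [Wrow_getElem, Wrow_getElem, e1, e2] at this
  simp only [Option.some_inj, decide_eq_decide] at this
  omega

lemma Wrow_lt (p q : ℕ) (hcop : Nat.gcd q (p + q) = 1) {j j' : ℕ} (hjj : j < j')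
    (hj' : j' < p + q) : Wrow p q (p+q) j < Wrow p q (p+q) j' :=
  lt_of_le_of_ne (Wrow_mono p q _ j j' hjj hj') (Wrow_ne p q hcop hjj hj')



-- ### the Christoffel word
def cw (p q : ℕ) : List Bool := Wrow p q (p+q) 0

lemma gcd_q_n {p q : ℕ} (h : Nat.gcd p q = 1) : Nat.gcd q (p+q) = 1 := by
  rw [Nat.gcd_add_self_right, Nat.gcd_comm]; exact h

lemma n_pos {p q : ℕ} (h : Nat.gcd p q = 1) : 0 < p + q := by
  by_contra hc
  have hp : p = 0 := by omega
  have hq : q = 0 := by omega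
  subst hp; subst hq
  simp at h

lemma cw_length (p q : ℕ) : (cw p q).length = p + q := Wrow_length _ _ _ _

lemma cw_ne_nil {p q : ℕ} (h : Nat.gcd p q = 1) : cw p q ≠ [] := by
  rw [← List.length_pos_iff, cw_length]
  exact n_pos h

lemma range_mul_mod_perm {q n : ℕ} (hn : 0 < n) (hcop : Nat.gcd q n = 1) :
    (List.range n).map (fun i => i * q % n) ~ List.range n := by
  have hnd : ((List.range n).map (fun i => i * q % n)).Nodup := by
    refine List.Nodup.map_on ?_ List.nodup_range
    intro i hi j hj h
    exact mul_mod_inj hcop (List.mem_range.mp hi) (List.mem_range.mp hj) h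
  have hsub : (List.range n).map (fun i => i * q % n) ⊆ List.range n := by
    intro x hx
    rcases List.mem_map.mp hx with ⟨i, _, rfl⟩
    exact List.mem_range.mpr (Nat.mod_lt _ hn)
  have hsp := List.subperm_of_subset hnd hsub
  exact hsp.perm_of_length_le (by simp)

lemma rotations_cw (p q : ℕ) (hn : 0 < p + q) :
    rotations (cw p q) = (List.range (p+q)).map (fun i => Wrow p q (p+q) (i * q % (p+q))) := by
  unfold rotations
  rw [cw_length]
  apply List.map_congr_left
  intro i _
  rw [cw, Wrow_rotate p q hn 0 i, Nat.add_zero]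

lemma sorted_rot_cw (p q : ℕ) (hcop : Nat.gcd p q = 1) :
    List.insertionSort (· ≤ ·) (rotations (cw p q)) =
      (List.range (p+q)).map (Wrow p q (p+q)) := by
  have hn := n_pos hcop
  apply List.eq_of_perm_of_sorted (r := (· ≤ · : List Bool → List Bool → Prop))
  · calc List.insertionSort (· ≤ ·) (rotations (cw p q))
        ~ rotations (cw p q) := List.perm_insertionSort _ _
      _ = (List.range (p+q)).map ((Wrow p q (p+q)) ∘ (fun i => i * q % (p+q))) := by
          rw [rotations_cw p q hn]; rfl
      _ = ((List.range (p+q)).map (fun i => i * q % (p+q))).map (Wrow p q (p+q)) := by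
          rw [List.map_map]
      _ ~ (List.range (p+q)).map (Wrow p q (p+q)) :=
          (range_mul_mod_perm hn (gcd_q_n hcop)).map _
  · exact List.pairwise_insertionSort _ _
  · rw [List.pairwise_map]
    refine List.Pairwise.imp_of_mem ?_ List.pairwise_lt_range
    intro a b ha hb hab
    exact Wrow_mono p q _ a b hab (List.mem_range.mp hb)

lemma getLast!_Wrow (p q j : ℕ) (hn : 0 < p + q) (hj : j < p + q) :
    (Wrow p q (p+q) j).getLast! = decide (j < q) := by
  set n := p + q with hn'
  have hne : Wrow p q n j ≠ [] := by
    rw [← List.length_pos_iff, Wrow_length]; exact hn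
  rw [getLast!_eq_getElem _ hne]
  have hlen : (Wrow p q n j).length = n := Wrow_length _ _ _ _
  rw [Wrow_getElem]
  have harg : ((Wrow p q n j).length - 1) * q + j = (n - 1) * q + j := by rw [hlen]
  rw [harg]
  have key : ((n-1) * q + j) % n = (j + p) % n := by
    apply Nat.ModEq.add_right_cancel' q
    have h1 : (n-1) * q + j + q = n * q + j := by
      have h2 : (n-1) * q = n * q - q := by rw [Nat.sub_one_mul]
      have h3 : q ≤ n * q := Nat.le_mul_of_pos_left q hn
      omega
    have h4 : j + p + q = j + n := by omega
    rw [h1, h4]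
    calc (n * q + j) % n = (j + q * n) % n := by rw [Nat.mul_comm]; rw [Nat.add_comm]
      _ = j % n := Nat.add_mul_mod_self_right j q n
      _ = (j + 1 * n) % n := by rw [Nat.add_mul_mod_self_right]
      _ = (j + n) % n := by rw [Nat.one_mul]
  rw [key]
  rcases lt_or_ge j q with hjq | hjq
  · rw [Nat.mod_eq_of_lt (by omega), decide_eq_true (by omega), decide_eq_true hjq]
  · rw [Nat.mod_eq_sub_mod (by omega), show j + p - n = j - q by omega,
      Nat.mod_eq_of_lt (by omega), decide_eq_false (by omega), decide_eq_false (by omega)]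

lemma range_decide_lt (a b : ℕ) :
    (List.range (a+b)).map (fun j => decide (j < a)) =
      List.replicate a true ++ List.replicate b false := by
  apply List.ext_getElem
  · simp
  · intro i h1 h2
    rw [List.getElem_map, List.getElem_range, getElem_rep_rep]
    simp only [List.length_map, List.length_range] at h1
    rcases lt_or_ge i a with h | h
    · rw [if_pos h, decide_eq_true h]
    · rw [if_neg (by omega), decide_eq_false (by omega)]

lemma range_decide_le (a b : ℕ) :
    (List.range (a+b)).map (fun j => decide (a ≤ j)) =
      List.replicate a false ++ List.replicate b true := by
  apply List.ext_getElem
  · simp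
  · intro i h1 h2
    rw [List.getElem_map, List.getElem_range, getElem_rep_rep]
    simp only [List.length_map, List.length_range] at h1
    rcases lt_or_ge i a with h | h
    · rw [if_pos h, decide_eq_false (by omega)]
    · rw [if_neg (by omega), decide_eq_true (by omega)]

lemma BWT_cw (p q : ℕ) (hcop : Nat.gcd p q = 1) :
    BWT (cw p q) = List.replicate q true ++ List.replicate p false := by
  have hn := n_pos hcop
  rw [BWT_eq_map (cw_ne_nil hcop), sorted_rot_cw p q hcop, List.map_map]
  have : (List.range (p+q)).map (List.getLast! ∘ Wrow p q (p+q)) =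
      (List.range (p+q)).map (fun j => decide (j < q)) := by
    apply List.map_congr_left
    intro j hj
    exact getLast!_Wrow p q j hn (List.mem_range.mp hj)
  rw [this, show p + q = q + p by omega, range_decide_lt q p]

lemma count_cw (p q : ℕ) (hcop : Nat.gcd p q = 1) :
    (cw p q).count false = p ∧ (cw p q).count true = q := by
  have hn := n_pos hcop
  have h1 : cw p q = ((List.range (p+q)).map (fun i => i * q % (p+q))).map
      (fun j => decide (p ≤ j)) := by
    rw [List.map_map]
    unfold cw Wrow
    apply List.map_congr_left
    intro k _
    simp
  have h2 : cw p q ~ (List.range (p+q)).map (fun j => decide (p ≤ j)) := by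
    rw [h1]
    exact (range_mul_mod_perm hn (gcd_q_n hcop)).map _
  rw [range_decide_le p q] at h2
  constructor
  · rw [h2.count_eq]; simp [List.count_replicate]
  · rw [h2.count_eq]; simp [List.count_replicate]

lemma flatten_replicate_nil (k : ℕ) : (List.replicate k ([] : List Bool)).flatten = [] := by
  induction k with
  | zero => rfl
  | succ k ih => rw [List.replicate_succ, List.flatten_cons, List.nil_append, ih]

lemma cw_primitive (p q : ℕ) (hcop : Nat.gcd p q = 1) : IsPrimitiveWord (cw p q) := by
  have hn := n_pos hcop
  refine ⟨cw_ne_nil hcop, ?_⟩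
  intro u k h
  by_contra hk
  rcases Nat.eq_zero_or_pos k with rfl | hkpos
  · rw [List.replicate_zero, List.flatten_nil] at h
    exact (cw_ne_nil hcop) h
  have hk2 : 2 ≤ k := by omega
  have hu : u ≠ [] := by
    rintro rfl
    rw [flatten_replicate_nil] at h
    exact (cw_ne_nil hcop) h
  have hulen : 0 < u.length := List.length_pos_iff.mpr hu
  have hlen : p + q = k * u.length := by
    rw [← cw_length p q, h, List.length_flatten, List.map_replicate, List.sum_replicate,
      smul_eq_mul]
  have hultn : u.length < p + q := by
    have : 2 * u.length ≤ k * u.length := Nat.mul_le_mul_right _ hk2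
    omega
  have hrot : (cw p q).rotate u.length = cw p q := rotate_of_pow _ u k hkpos h
  rw [cw, Wrow_rotate p q hn 0 u.length, Nat.add_zero] at hrot
  have hj0 : u.length * q % (p+q) = 0 := by
    by_contra hj
    exact Wrow_ne p q (gcd_q_n hcop) (Nat.pos_of_ne_zero hj) (Nat.mod_lt _ hn) hrot.symm
  have : u.length = 0 := by
    apply mul_mod_inj (gcd_q_n hcop) hultn hn
    rw [hj0, Nat.zero_mul, Nat.zero_mod]
  omega

theorem cw_perfectly_clustering (p q : ℕ) (hcop : Nat.gcd p q = 1) :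
    PerfectlyClustering (cw p q) ∧ (cw p q).count false = p ∧ (cw p q).count true = q := by
  refine ⟨⟨cw_primitive p q hcop, ?_⟩, count_cw p q hcop⟩
  rw [BWT_cw p q hcop]
  exact chain'_ge_rep_rep q p


-- ### converse: every perfectly clustering word is a rotation of cw
lemma rotate1_cons (a : Bool) (l : List Bool) : (a :: l).rotate 1 = l ++ [a] := by
  rw [show (1:ℕ) = 0 + 1 by rfl, List.rotate_cons_succ, List.rotate_zero]

lemma getLast!_concat (l : List Bool) (a : Bool) : (l ++ [a]).getLast! = a :=
  List.getLast!_of_getLast? (List.getLast?_concat)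

lemma head!_rotate {w : List Bool} (hw : w ≠ []) {k : ℕ} (hk : k < w.length) :
    (w.rotate k).head! = w[k] := by
  have hne : w.rotate k ≠ [] := by
    rw [← List.length_pos_iff, List.length_rotate]
    omega
  rw [head!_eq_getElem _ hne, List.getElem_rotate]
  congr 1
  rw [Nat.zero_add, Nat.mod_eq_of_lt hk]

lemma getLast!_rotate1 {u : List Bool} (hu : u ≠ []) : (u.rotate 1).getLast! = u.head! := by
  cases u with
  | nil => exact absurd rfl hu
  | cons a l => rw [rotate1_cons, getLast!_concat, List.head!_cons]

lemma rotate1_lt {u v : List Bool} (hlen : u.length = v.length)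
    (hhead : u.head! = v.head!) (h : u < v) : u.rotate 1 < v.rotate 1 := by
  cases u with
  | nil =>
    cases v with
    | nil => exact absurd h (lt_irrefl _)
    | cons b l' => simp at hlen
  | cons a l =>
    cases v with
    | nil => simp at hlen
    | cons b l' =>
      simp only [List.head!_cons] at hhead
      subst hhead
      rw [rotate1_cons, rotate1_cons]
      rw [lex_append_singleton a l l' (by simpa using hlen)]
      exact cons_lt_cons_iff.mp h

/-- The key structure theorem: a perfectly clustering word is a rotation of the
Christoffel word, and its counts are coprime. -/
theorem pc_key {w : List Bool} (hpc : PerfectlyClustering w) :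
    Nat.gcd (w.count false) (w.count true) = 1 ∧
      (cw (w.count false) (w.count true)).IsRotated w := by
  obtain ⟨hprim, hchain⟩ := hpc
  have hwne : w ≠ [] := hprim.1
  set p := w.count false with hp
  set q := w.count true with hq
  set n := w.length with hnw
  have hnpq : n = p + q := length_eq_counts w
  have hn : 0 < n := List.length_pos_iff.mpr hwne
  set R := List.insertionSort (· ≤ · : List Bool → List Bool → Prop) (rotations w) with hR
  have r1 : R ~ rotations w := List.perm_insertionSort _ _
  have r2 : R.length = n := by rw [r1.length_eq, length_rotations]
  have r3 : List.Pairwise (· ≤ ·) R := List.pairwise_insertionSort _ _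
  have r4 : R.Nodup := r1.nodup_iff.mpr (rotations_nodup hprim)
  have r5 : List.Pairwise (· < ·) R := by
    have := List.Pairwise.and r3 r4
    exact this.imp (fun h => lt_of_le_of_ne h.1 h.2)
  have r6 : ∀ x ∈ R, x ≠ [] ∧ x.length = n ∧ x ∈ rotations w := by
    intro x hx
    have hx' : x ∈ rotations w := r1.subset hx
    exact ⟨ne_nil_of_mem_rotations hwne hx', length_of_mem_rotations hx', hx'⟩
  -- heads
  have hH : R.map List.head! = List.replicate p false ++ List.replicate q true := by
    have hperm : R.map List.head! ~ w := by
      calc R.map List.head! ~ (rotations w).map List.head! := r1.map _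
        _ = w := map_head!_rotations
    have hsorted : List.Pairwise (· ≤ ·) (R.map List.head!) := by
      rw [List.pairwise_map]
      refine r5.imp_of_mem ?_
      intro u v hu hv huv
      obtain ⟨hu1, hu2, _⟩ := r6 u hu
      obtain ⟨hv1, hv2, _⟩ := r6 v hv
      cases u with
      | nil => exact absurd rfl hu1
      | cons a l =>
        cases v with
        | nil => exact absurd rfl hv1
        | cons b l' =>
          simp only [List.head!_cons]
          exact head_le_of_le (le_of_lt huv)
    have := asc_eq hsorted
    rwa [hperm.count_eq false, hperm.count_eq true] at this
  have headR : ∀ i (hi : i < n), (R[i]'(r2 ▸ hi)).head! = decide (p ≤ i) := by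
    intro i hi
    have h1 : (R[i]'(r2 ▸ hi)).head! =
        (List.replicate p false ++ List.replicate q true)[i]'(by simp; omega) := by
      rw [show (R[i]'(r2 ▸ hi)).head! = (R.map List.head!)[i]'(by simpa [r2] using hi) from
        (List.getElem_map _).symm]
      exact List.getElem_of_eq hH _
    rw [h1, getElem_rep_rep]
    rcases lt_or_ge i p with h | h
    · rw [if_pos h, decide_eq_false (by omega)]
    · rw [if_neg (by omega), decide_eq_true (by omega)]
  -- lasts
  have hBWT : BWT w = List.replicate q true ++ List.replicate p false := by
    have hperm : BWT w ~ w := BWT_perm hwne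
    have := desc_eq hchain
    rwa [hperm.count_eq true, hperm.count_eq false] at this
  have hL : R.map List.getLast! = List.replicate q true ++ List.replicate p false := by
    rw [← hBWT, BWT_eq_map hwne]
  have lastR : ∀ i (hi : i < n), (R[i]'(r2 ▸ hi)).getLast! = decide (i < q) := by
    intro i hi
    have h1 : (R[i]'(r2 ▸ hi)).getLast! =
        (List.replicate q true ++ List.replicate p false)[i]'(by simp; omega) := by
      rw [show (R[i]'(r2 ▸ hi)).getLast! = (R.map List.getLast!)[i]'(by simpa [r2] using hi) from
        (List.getElem_map _).symm]
      exact List.getElem_of_eq hL _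
    rw [h1, getElem_rep_rep]
    rcases lt_or_ge i q with h | h
    · rw [if_pos h, decide_eq_true h]
    · rw [if_neg (by omega), decide_eq_false (by omega)]
  haveI : IsAntisymm (List Bool) (· < · : List Bool → List Bool → Prop) :=
    ⟨fun a b h h' => absurd h' (asymm h)⟩
  -- rotating an element of R by 1 lands in R
  have rotmem : ∀ i (hi : i < n), ∃ j, ∃ (hj : j < n),
      (R[i]'(r2 ▸ hi)).rotate 1 = R[j]'(r2 ▸ hj) := by
    intro i hi
    obtain ⟨hne, hlen, hrot⟩ := r6 (R[i]'(r2 ▸ hi)) (List.getElem_mem _)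
    obtain ⟨m, hm, hmeq⟩ := mem_rotations.mp hrot
    have : (R[i]'(r2 ▸ hi)).rotate 1 ∈ rotations w := by
      rw [hmeq, List.rotate_rotate]
      exact rotate_mem_rotations hwne _
    have hmem : (R[i]'(r2 ▸ hi)).rotate 1 ∈ R := r1.mem_iff.mpr this
    obtain ⟨j, hj, hjeq⟩ := List.mem_iff_getElem.mp hmem
    exact ⟨j, r2 ▸ hj, hjeq.symm⟩
  -- first half : i < p → R[i].rotate 1 = R[q+i]
  have tau1 : (R.take p).map (fun u => u.rotate 1) = R.drop q := by
    have hpn : p ≤ n := by omega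
    have hqn : q ≤ n := by omega
    have hlt : (R.take p).length = p := by rw [List.length_take, r2]; omega
    have hld : (R.drop q).length = p := by rw [List.length_drop, r2]; omega
    have hXlen : ((R.take p).map (fun u => u.rotate 1)).length = p := by
      rw [List.length_map, hlt]
    have hXpair : List.Pairwise (· < ·) ((R.take p).map (fun u => u.rotate 1)) := by
      rw [List.pairwise_map]
      refine ((r5.sublist (List.take_sublist p R)).imp_of_mem ?_)
      intro u v hu hv huv
      obtain ⟨iu, hiu, hiueq⟩ := List.mem_iff_getElem.mp hu
      obtain ⟨iv, hiv, hiveq⟩ := List.mem_iff_getElem.mp hv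
      rw [hlt] at hiu hiv
      have hiun : iu < n := by omega
      have hivn : iv < n := by omega
      have hueq : u = R[iu]'(r2 ▸ hiun) := by rw [← hiueq, List.getElem_take]
      have hveq : v = R[iv]'(r2 ▸ hivn) := by rw [← hiveq, List.getElem_take]
      apply rotate1_lt
      · rw [hueq, hveq, (r6 _ (List.getElem_mem _)).2.1, (r6 _ (List.getElem_mem _)).2.1]
      · rw [hueq, hveq, headR iu hiun, headR iv hivn,
          decide_eq_false (by omega), decide_eq_false (by omega)]
      · exact huv
    have hXnodup : ((R.take p).map (fun u => u.rotate 1)).Nodup :=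
      hXpair.imp (fun h => ne_of_lt h)
    have hsub : ((R.take p).map (fun u => u.rotate 1)) ⊆ R.drop q := by
      intro x hx
      obtain ⟨u, hu, rfl⟩ := List.mem_map.mp hx
      obtain ⟨iu, hiu, hiueq⟩ := List.mem_iff_getElem.mp hu
      rw [hlt] at hiu
      have hiun : iu < n := by omega
      have hueq : u = R[iu]'(r2 ▸ hiun) := by rw [← hiueq, List.getElem_take]
      obtain ⟨j, hj, hjeq⟩ := rotmem iu hiun
      have hlast : (R[j]'(r2 ▸ hj)).getLast! = false := by
        rw [← hjeq, getLast!_rotate1 (r6 _ (List.getElem_mem _)).1, headR iu hiun,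
          decide_eq_false (by omega)]
      rw [lastR j hj] at hlast
      have hjq : q ≤ j := by
        by_contra hc
        rw [decide_eq_true (by omega)] at hlast
        exact Bool.true_eq_false ▸ (by simp at hlast)
      have : (R.drop q)[j - q]'(by rw [hld]; omega) = R[j]'(r2 ▸ hj) := by
        rw [List.getElem_drop]
        congr 1
        omega
      rw [hueq, hjeq, ← this]
      exact List.getElem_mem _
    have hsp := List.subperm_of_subset hXnodup hsub
    have hperm := hsp.perm_of_length_le (by rw [hXlen, hld])
    refine List.eq_of_perm_of_sorted hperm hXpair ?_
    exact r5.sublist (List.drop_sublist q R)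
  -- second half : i < q → R[p+i].rotate 1 = R[i]
  have tau2 : (R.drop p).map (fun u => u.rotate 1) = R.take q := by
    have hpn : p ≤ n := by omega
    have hqn : q ≤ n := by omega
    have hlt : (R.take q).length = q := by rw [List.length_take, r2]; omega
    have hld : (R.drop p).length = q := by rw [List.length_drop, r2]; omega
    have hXlen : ((R.drop p).map (fun u => u.rotate 1)).length = q := by
      rw [List.length_map, hld]
    have hXpair : List.Pairwise (· < ·) ((R.drop p).map (fun u => u.rotate 1)) := by
      rw [List.pairwise_map]
      refine ((r5.sublist (List.drop_sublist p R)).imp_of_mem ?_)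
      intro u v hu hv huv
      obtain ⟨iu, hiu, hiueq⟩ := List.mem_iff_getElem.mp hu
      obtain ⟨iv, hiv, hiveq⟩ := List.mem_iff_getElem.mp hv
      rw [hld] at hiu hiv
      have hiun : p + iu < n := by omega
      have hivn : p + iv < n := by omega
      have hueq : u = R[p + iu]'(r2 ▸ hiun) := by rw [← hiueq, List.getElem_drop]
      have hveq : v = R[p + iv]'(r2 ▸ hivn) := by rw [← hiveq, List.getElem_drop]
      apply rotate1_lt
      · rw [hueq, hveq, (r6 _ (List.getElem_mem _)).2.1, (r6 _ (List.getElem_mem _)).2.1]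
      · rw [hueq, hveq, headR _ hiun, headR _ hivn,
          decide_eq_true (by omega), decide_eq_true (by omega)]
      · exact huv
    have hXnodup : ((R.drop p).map (fun u => u.rotate 1)).Nodup :=
      hXpair.imp (fun h => ne_of_lt h)
    have hsub : ((R.drop p).map (fun u => u.rotate 1)) ⊆ R.take q := by
      intro x hx
      obtain ⟨u, hu, rfl⟩ := List.mem_map.mp hx
      obtain ⟨iu, hiu, hiueq⟩ := List.mem_iff_getElem.mp hu
      rw [hld] at hiu
      have hiun : p + iu < n := by omega
      have hueq : u = R[p + iu]'(r2 ▸ hiun) := by rw [← hiueq, List.getElem_drop]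
      obtain ⟨j, hj, hjeq⟩ := rotmem (p + iu) hiun
      have hlast : (R[j]'(r2 ▸ hj)).getLast! = true := by
        rw [← hjeq, getLast!_rotate1 (r6 _ (List.getElem_mem _)).1, headR _ hiun,
          decide_eq_true (by omega)]
      rw [lastR j hj] at hlast
      have hjq : j < q := by
        by_contra hc
        rw [decide_eq_false (by omega)] at hlast
        simp at hlast
      have : (R.take q)[j]'(by rw [hlt]; omega) = R[j]'(r2 ▸ hj) := List.getElem_take
      rw [hueq, hjeq, ← this]
      exact List.getElem_mem _
    have hsp := List.subperm_of_subset hXnodup hsub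
    have hperm := hsp.perm_of_length_le (by rw [hXlen, hlt])
    refine List.eq_of_perm_of_sorted hperm hXpair ?_
    exact r5.sublist (List.take_sublist q R)
  -- combined step
  have tau : ∀ i (hi : i < n), (R[i]'(r2 ▸ hi)).rotate 1 = R[(i + q) % n]'(by rw [r2]; exact Nat.mod_lt _ hn) := by
    intro i hi
    rcases lt_or_ge i p with hip | hip
    · have h1 : ((R.take p).map (fun u => u.rotate 1))[i]'(by
        rw [List.length_map, List.length_take, r2]; omega) =
          (R.drop q)[i]'(by rw [List.length_drop, r2]; omega) := List.getElem_of_eq tau1 _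
      rw [List.getElem_map, List.getElem_take, List.getElem_drop] at h1
      have : (i + q) % n = q + i := by rw [Nat.mod_eq_of_lt (by omega)]; omega
      simp only [this]
      exact h1
    · have hi' : i - p < q := by omega
      have h1 : ((R.drop p).map (fun u => u.rotate 1))[i - p]'(by
        rw [List.length_map, List.length_drop, r2]; omega) =
          (R.take q)[i - p]'(by rw [List.length_take, r2]; omega) := List.getElem_of_eq tau2 _
      rw [List.getElem_map, List.getElem_drop, List.getElem_take] at h1
      have e1 : p + (i - p) = i := by omega
      have e2 : (i + q) % n = i - p := by
        rw [show i + q = (i - p) + n by omega, Nat.add_mod_right, Nat.mod_eq_of_lt (by omega)]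
      simp only [e1] at h1
      simp only [e2]
      exact h1
  -- locate w in R
  obtain ⟨i0, hi0, hi0eq⟩ : ∃ i0, ∃ (hi0 : i0 < n), R[i0]'(r2 ▸ hi0) = w := by
    have hmem : w ∈ R := r1.mem_iff.mpr (by
      have := rotate_mem_rotations hwne 0
      rwa [List.rotate_zero] at this)
    obtain ⟨j, hj, hjeq⟩ := List.mem_iff_getElem.mp hmem
    exact ⟨j, r2 ▸ hj, hjeq⟩
  -- iterate
  have tau_iter : ∀ k, w.rotate k = R[(i0 + k * q) % n]'(by rw [r2]; exact Nat.mod_lt _ hn) := by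
    intro k
    induction k with
    | zero =>
      simp only [Nat.zero_mul, Nat.add_zero, List.rotate_zero]
      rw [← hi0eq]
      congr 1
      rw [Nat.mod_eq_of_lt hi0]
    | succ k ih =>
      have h1 : w.rotate (k + 1) = (w.rotate k).rotate 1 := by
        rw [List.rotate_rotate]
      rw [h1, ih, tau _ (Nat.mod_lt _ hn)]
      congr 1
      rw [Nat.mod_add_mod]
      congr 1
      ring
  -- injectivity gives coprimality
  have hinj : ∀ k k', k < n → k' < n → k * q % n = k' * q % n → k = k' := by
    intro k k' hk hk' hkk
    have h1 : (i0 + k * q) % n = (i0 + k' * q) % n := by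
      rw [← Nat.add_mod_mod, ← Nat.add_mod_mod i0 (k' * q), hkk]
    have h2 : w.rotate k = w.rotate k' := by
      rw [tau_iter k, tau_iter k']
      congr 1
    exact rotate_injOn hprim (hnw ▸ hk) (hnw ▸ hk') h2
  have hgcd : Nat.gcd q n = 1 := gcd_of_inj hn hinj
  have hgcdpq : Nat.gcd p q = 1 := by
    rw [hnpq, Nat.gcd_add_self_right, Nat.gcd_comm] at hgcd
    exact hgcd
  refine ⟨hgcdpq, ?_⟩
  -- identify w with a rotation of cw
  obtain ⟨m, hm, hmeq⟩ := mul_mod_surj hn hgcd i0 hi0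
  refine ⟨m, ?_⟩
  have hcwrot : (cw p q).rotate m = Wrow p q (p + q) i0 := by
    rw [cw, Wrow_rotate p q (by omega) 0 m, Nat.add_zero, ← hnpq, hmeq]
  rw [hcwrot]
  apply List.ext_getElem
  · rw [Wrow_length, ← hnpq, ← hnw]
  · intro k h1 h2
    rw [Wrow_getElem]
    have hkn : k < n := by rwa [← hnw] at h2
    have hhead : (w.rotate k).head! = w[k] := head!_rotate hwne hkn
    have h3 : (w.rotate k).head! = decide (p ≤ (i0 + k * q) % n) := by
      rw [tau_iter k, headR _ (Nat.mod_lt _ hn)]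
    rw [← hhead, h3, ← hnpq]
    congr 2
    rw [Nat.add_comm]

end PCW

theorem stmt14 (p q : ℕ) :
    ((∃ w : List Bool, PerfectlyClustering w ∧
        w.count false = p ∧ w.count true = q) ↔ Nat.gcd p q = 1) ∧
    (∀ w w' : List Bool, PerfectlyClustering w → PerfectlyClustering w' →
      w.count false = p → w.count true = q →
      w'.count false = p → w'.count true = q → List.IsRotated w w') := by
  constructor
  · constructor
    · rintro ⟨w, hpc, hcf, hct⟩
      have := (PCW.pc_key hpc).1
      rwa [hcf, hct] at this
    · intro hgcd
      obtain ⟨h1, h2, h3⟩ := PCW.cw_perfectly_clustering p q hgcd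
      exact ⟨PCW.cw p q, h1, h2, h3⟩
  · intro w w' h h' hcf hct hcf' hct'
    have h1 := (PCW.pc_key h).2
    have h2 := (PCW.pc_key h').2
    rw [hcf, hct] at h1
    rw [hcf', hct'] at h2
    exact h1.symm.trans h2
end

section
/- Let w be a perfectly clustering word over a totally ordered alphabet. Then w is conjugate to its reversal. -/
variable {α : Type*}

namespace BWTProofAux

open List

/-- arithmetic helper -/
theorem mod_aux {n m : ℕ} (hn : 0 < n) (h1 : 1 ≤ m) (h2 : m ≤ n) :
    ((n - 1) * m) % n = n - m := by
  induction m with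
  | zero => omega
  | succ m ih =>
    rcases Nat.eq_zero_or_pos m with rfl | hm
    · have he : (n - 1) * (0 + 1) = n - 1 := by ring
      rw [he, Nat.mod_eq_of_lt (by omega)]
    · have ihm := ih (by omega) (by omega)
      have he : (n - 1) * (m + 1) = (n - 1) * m + (n - 1) := by ring
      rw [he, Nat.add_mod, ihm, Nat.mod_eq_of_lt (show n - 1 < n by omega)]
      have he2 : (n - m) + (n - 1) = (n - (m + 1)) + n := by omega
      rw [he2, Nat.add_mod_right, Nat.mod_eq_of_lt (by omega)]

/-- two commuting words are powers of a common word -/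
theorem comm_aux : ∀ (N : ℕ) (u v : List α), u.length + v.length ≤ N →
    u ++ v = v ++ u →
    ∃ (t : List α) (k m : ℕ), u = (List.replicate k t).flatten ∧
      v = (List.replicate m t).flatten := by
  intro N
  induction N using Nat.strong_induction_on with
  | _ N ih =>
    intro u v hlen h
    rcases eq_or_ne u [] with rfl | hu
    · exact ⟨v, 0, 1, by simp, by simp⟩
    rcases eq_or_ne v [] with rfl | hv
    · exact ⟨u, 1, 0, by simp, by simp⟩
    have hu0 : 0 < u.length := length_pos_iff.2 hu
    have hv0 : 0 < v.length := length_pos_iff.2 hv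
    rcases le_total u.length v.length with hle | hle
    · have hpre : v.take u.length = u := by
        have h' := congrArg (fun l => List.take u.length l) h
        simp only [take_left] at h'
        rw [take_append_of_le_length hle] at h'
        exact h'.symm
      have hveq : v = u ++ v.drop u.length := by
        conv_lhs => rw [← take_append_drop u.length v, hpre]
      set v' := v.drop u.length with hv'
      have h2 : u ++ v' = v' ++ u := by
        have h3 : u ++ (u ++ v') = (u ++ v') ++ u := by rw [← hveq]; exact h
        rw [List.append_assoc] at h3
        exact List.append_cancel_left h3
      have hlt : u.length + v'.length < N := by
        have : v'.length = v.length - u.length := by simp [hv']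
        omega
      obtain ⟨t, k, m, e1, e2⟩ := ih _ hlt u v' le_rfl h2
      refine ⟨t, k, k + m, e1, ?_⟩
      rw [hveq, e1, e2, replicate_add, flatten_append]
    · have hpre : u.take v.length = v := by
        have h' := congrArg (fun l => List.take v.length l) h.symm
        simp only [take_left] at h'
        rw [take_append_of_le_length hle] at h'
        exact h'.symm
      have hueq : u = v ++ u.drop v.length := by
        conv_lhs => rw [← take_append_drop v.length u, hpre]
      set u' := u.drop v.length with hu'
      have h2 : u' ++ v = v ++ u' := by
        have h3 : v ++ (u' ++ v) = v ++ (v ++ u') := by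
          rw [← List.append_assoc, ← hueq]; exact h
        exact List.append_cancel_left h3
      have hlt : u'.length + v.length < N := by
        have : u'.length = u.length - v.length := by simp [hu']
        omega
      obtain ⟨t, k, m, e1, e2⟩ := ih _ hlt u' v le_rfl h2
      refine ⟨t, m + k, m, ?_, e2⟩
      rw [hueq, e1, e2, replicate_add, flatten_append]

theorem prim_rotate {w : List α} (hp : IsPrimitiveWord w) {d : ℕ}
    (hdlt : d < w.length) (h : w.rotate d = w) : d = 0 := by
  have hle : d ≤ w.length := le_of_lt hdlt
  rw [rotate_eq_drop_append_take hle] at h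
  have hcomm : w.take d ++ w.drop d = w.drop d ++ w.take d := by
    rw [take_append_drop, h]
  obtain ⟨t, k, m, h1, h2⟩ :=
    comm_aux ((w.take d).length + (w.drop d).length) _ _ le_rfl hcomm
  have hwflat : w = (List.replicate (k + m) t).flatten := by
    rw [replicate_add, flatten_append, ← h1, ← h2, take_append_drop]
  have hkm := hp.2 t (k + m) hwflat
  have hw0 : w ≠ [] := hp.1
  rcases Nat.eq_zero_or_pos k with rfl | hk
  · -- take d = [] so d = 0
    simp only [zero_add] at hkm
    simp only [List.replicate_zero, List.flatten_nil] at h1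
    rcases (take_eq_nil_iff).1 h1 with h' | h'
    · exact h'
    · exact absurd h' hw0
  · have hk1 : k = 1 := by omega
    have hm0 : m = 0 := by omega
    subst hk1; subst hm0
    simp only [List.replicate_zero, List.flatten_nil] at h2
    have := (drop_eq_nil_iff).1 h2
    omega

theorem nodup_rotations {w : List α} (hp : IsPrimitiveWord w) :
    (rotations w).Nodup := by
  have hw0 : w ≠ [] := hp.1
  have hn : 0 < w.length := length_pos_iff.2 hw0
  apply List.Nodup.map_on _ List.nodup_range
  intro i hi j hj hij
  rw [List.mem_range] at hi hj
  -- wlog style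
  have key : ∀ i j : ℕ, i < w.length → j < w.length → i ≤ j →
      w.rotate i = w.rotate j → i = j := by
    intro i j hi hj hle h
    have h1 : (w.rotate i).rotate (w.length - i) = w := by
      rw [rotate_rotate]
      have : i + (w.length - i) = w.length := by omega
      rw [this, rotate_length]
    have h2 : (w.rotate j).rotate (w.length - i) = w.rotate (j - i) := by
      rw [rotate_rotate]
      have he : j + (w.length - i) = (j - i) + w.length := by omega
      rw [he, ← rotate_rotate]
      have : (w.rotate (j - i)).length = w.length := by rw [length_rotate]
      rw [← this, rotate_length]
    have h3 : w.rotate (j - i) = w := by rw [← h2, ← h, h1]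
    have := prim_rotate hp (show j - i < w.length by omega) h3
    omega
  rcases le_total i j with hle | hle
  · exact key i j hi hj hle hij
  · exact (key j i hj hi hle hij.symm).symm

theorem rot_concat (d : List α) (c : α) :
    (d ++ [c]).rotate ((d ++ [c]).length - 1) = c :: d := by
  have h1 : (d ++ [c]).length - 1 = d.length := by simp
  rw [h1, List.rotate_eq_drop_append_take (by simp), List.drop_left, List.take_left]
  simp

theorem rotate_pred {x : List α} (h : x ≠ []) :
    x.rotate (x.length - 1) = x.getLast h :: x.dropLast := by
  calc x.rotate (x.length - 1)
      = (x.dropLast ++ [x.getLast h]).rotate ((x.dropLast ++ [x.getLast h]).length - 1) := by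
        rw [List.dropLast_append_getLast h]
    _ = x.getLast h :: x.dropLast := rot_concat _ _

theorem lex_concat [LinearOrder α] {c : α} :
    ∀ {u v : List α}, u.length = v.length →
      List.Lex (· < ·) (u ++ [c]) (v ++ [c]) →
      List.Lex (· < ·) u v ∨ u = v := by
  intro u
  induction u with
  | nil =>
    intro v hlen _
    cases v with
    | nil => exact Or.inr rfl
    | cons b v => simp at hlen
  | cons a u ih =>
    intro v hlen h
    cases v with
    | nil => simp at hlen
    | cons b v =>
      cases h with
      | rel hr => exact Or.inl (List.Lex.rel hr)
      | cons h' =>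
        rcases ih (by simpa using hlen) h' with h'' | h''
        · exact Or.inl (List.Lex.cons h'')
        · exact Or.inr (by rw [h''])

theorem filterMap_getLast?_eq [Inhabited α] :
    ∀ (M : List (List α)), (∀ x ∈ M, x ≠ []) →
      M.filterMap List.getLast? = M.map (fun x => x.getLastD default) := by
  intro M
  induction M with
  | nil => intro _; rfl
  | cons x M ih =>
    intro h
    have hx : x ≠ [] := h x (by simp)
    have hsome : x.getLast? = some (x.getLastD default) := by
      rw [List.getLast?_eq_getLast hx, getLastD_eq_getLast?,
        List.getLast?_eq_getLast hx, Option.getD_some]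
    rw [List.filterMap_cons, hsome, List.map_cons,
      ih (fun y hy => h y (by simp [hy]))]

theorem strictmono_fin_id {n : ℕ} {f : Fin n → Fin n} (hf : StrictMono f) :
    ∀ i, f i = i := by
  have hsurj : Function.Surjective f :=
    (Finite.injective_iff_surjective).1 hf.injective
  have hrange : Set.range f = Set.range (id : Fin n → Fin n) := by
    rw [Set.range_id, Set.range_eq_univ.2 hsurj]
  have := (StrictMono.range_inj hf strictMono_id).1 hrange
  exact fun i => congrFun this i

theorem rotgetD [Inhabited α] (x : List α) (r k : ℕ) (hk : k < x.length) :
    (x.rotate r).getD k default = x.getD ((k + r) % x.length) default := by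
  have hx0 : 0 < x.length := lt_of_le_of_lt (Nat.zero_le _) hk
  have h1 : k < (x.rotate r).length := by rw [List.length_rotate]; exact hk
  have h2 : (k + r) % x.length < x.length := Nat.mod_lt _ hx0
  rw [List.getD_eq_getElem _ _ h1, List.getD_eq_getElem _ _ h2]
  have h3 := List.get_rotate x r ⟨k, h1⟩
  simpa [List.get_eq_getElem] using h3

theorem getD_head [Inhabited α] {x : List α} (h : x ≠ []) :
    x.head h = x.getD 0 default := by
  rw [List.head_eq_getElem, List.getD_eq_getElem _ _ (by simp [List.length_pos_iff.2 h])]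

theorem getD_getLast [Inhabited α] {x : List α} (h : x ≠ []) :
    x.getLast h = x.getD (x.length - 1) default := by
  have h0 : 0 < x.length := List.length_pos_iff.2 h
  rw [List.getLast_eq_getElem, List.getD_eq_getElem _ _ (by omega)]

theorem getD_getLastD [Inhabited α] {x : List α} (h : x ≠ []) :
    x.getLastD default = x.getD (x.length - 1) default := by
  rw [getLastD_eq_getLast?, List.getLast?_eq_getLast h, Option.getD_some,
    getD_getLast h]

end BWTProofAux

open BWTProofAux List in
theorem stmt15 [LinearOrder α] (w : List α) (hw : PerfectlyClustering w) :
    List.IsRotated w w.reverse := by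
  obtain ⟨hp, hchain⟩ := hw
  have hw0 : w ≠ [] := hp.1
  haveI : Inhabited α := ⟨w.head hw0⟩
  have hn : 0 < w.length := List.length_pos_iff.2 hw0
  set n := w.length with hn_def
  set L := List.insertionSort (· ≤ ·) (rotations w) with hL_def
  have hperm : L ~ rotations w := List.perm_insertionSort _ _
  have hrotlen : (rotations w).length = n := by simp [rotations, hn_def]
  have hLlen : L.length = n := by rw [hL_def, List.length_insertionSort, hrotlen]
  have hmemrot : ∀ x, x ∈ rotations w ↔ ∃ m, m < n ∧ w.rotate m = x := by
    intro x
    simp [rotations, List.mem_map, List.mem_range, hn_def]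
  have hmemL : ∀ x, x ∈ L ↔ ∃ m, m < n ∧ w.rotate m = x := by
    intro x; rw [hperm.mem_iff]; exact hmemrot x
  have hrow : ∀ i : Fin L.length, ∃ m, m < n ∧ w.rotate m = L.get i :=
    fun i => (hmemL _).1 (List.get_mem L i)
  have hrowlen : ∀ i : Fin L.length, (L.get i).length = n := by
    intro i
    obtain ⟨m, _, hm⟩ := hrow i
    rw [← hm, List.length_rotate]
  have hrowne : ∀ i : Fin L.length, L.get i ≠ [] := by
    intro i
    apply List.ne_nil_of_length_pos
    rw [hrowlen i]; exact hn
  have hrotmem : ∀ (x : List α), x ∈ L → ∀ r, x.rotate r ∈ L := by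
    intro x hx r
    obtain ⟨m, hmn, rfl⟩ := (hmemL x).1 hx
    rw [List.rotate_rotate, hmemL]
    refine ⟨(m + r) % n, Nat.mod_lt _ hn, ?_⟩
    rw [hn_def, List.rotate_mod]
  have hnodupL : L.Nodup := hperm.nodup_iff.2 (nodup_rotations hp)
  have hsorted : L.Pairwise (· ≤ ·) := List.pairwise_insertionSort _ _
  have hsortlt : L.Pairwise (· < ·) := (hsorted.and hnodupL).imp (fun h => lt_of_le_of_ne h.1 h.2)
  have hmono : ∀ {i j : Fin L.length}, i < j → L.get i < L.get j :=
    fun hij => List.pairwise_iff_get.1 hsortlt _ _ hij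
  have hget_inj : Function.Injective L.get := List.nodup_iff_injective_get.1 hnodupL
  have hlt_index : ∀ {i j : Fin L.length}, L.get i < L.get j → i < j := by
    intro i j hlt
    rcases lt_trichotomy i j with h | h | h
    · exact h
    · rw [h] at hlt; exact absurd hlt (lt_irrefl _)
    · exact absurd (hmono h) (lt_asymm hlt)
  -- the successor map π : row i ↦ the row which is the right-rotation of row i
  obtain ⟨π, hπ⟩ : ∃ π : Fin L.length → Fin L.length,
      ∀ i, L.get (π i) = (L.get i).rotate (n - 1) := by
    have hex : ∀ i : Fin L.length, ∃ k : Fin L.length,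
        L.get k = (L.get i).rotate (n - 1) := fun i =>
      List.mem_iff_get.1 (hrotmem _ (List.get_mem L i) _)
    exact ⟨fun i => (hex i).choose, fun i => (hex i).choose_spec⟩
  have hπlast : ∀ i, L.get (π i) = (L.get i).getLast (hrowne i) :: (L.get i).dropLast := by
    intro i
    rw [hπ i, ← hrowlen i]
    exact rotate_pred (hrowne i)
  -- heads and lasts via getD
  have hπhd : ∀ i, (L.get (π i)).getD 0 default = (L.get i).getD (n - 1) default := by
    intro i
    rw [hπlast i]
    simp only [List.getD_cons_zero]
    rw [getD_getLast (hrowne i), hrowlen i]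
  have hπiter : ∀ (m : ℕ) (i : Fin L.length),
      L.get (π^[m] i) = (L.get i).rotate ((n - 1) * m) := by
    intro m
    induction m with
    | zero => intro i; simp
    | succ m ih =>
      intro i
      rw [Function.iterate_succ_apply', hπ, ih, List.rotate_rotate]
      have he : (n - 1) * m + (n - 1) = (n - 1) * (m + 1) := by ring
      rw [he]
  have hπ_n : ∀ i, π^[n] i = i := by
    intro i
    apply hget_inj
    rw [hπiter]
    have h0 : ((n - 1) * n) % n = 0 := Nat.mul_mod_left _ _
    have he : (L.get i).rotate ((n - 1) * n)
        = (L.get i).rotate (((n - 1) * n) % (L.get i).length) := by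
      rw [List.rotate_mod]
    rw [he, hrowlen i, h0]
    simp
  -- order-preservation of π on rows with equal last letter
  have hπmono : ∀ {i j : Fin L.length}, i < j →
      (L.get i).getLast (hrowne i) = (L.get j).getLast (hrowne j) → π i < π j := by
    intro i j hij heq
    apply hlt_index
    rw [hπlast i, hπlast j, heq]
    have hlex : List.Lex (· < ·) (L.get i) (L.get j) := hmono hij
    rw [← List.dropLast_append_getLast (hrowne i),
      ← List.dropLast_append_getLast (hrowne j), heq] at hlex
    have hlen' : (L.get i).dropLast.length = (L.get j).dropLast.length := by
      rw [List.length_dropLast, List.length_dropLast, hrowlen, hrowlen]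
    rcases lex_concat hlen' hlex with h'' | h''
    · exact List.Lex.cons h''
    · exfalso
      have hrows : L.get i = L.get j := by
        rw [← List.dropLast_append_getLast (hrowne i),
          ← List.dropLast_append_getLast (hrowne j), heq, h'']
      exact absurd (hget_inj hrows) hij.ne
  -- last letters weakly decreasing along L
  have hBWT : BWT w = L.map (fun x => x.getLastD default) := by
    have : BWT w = L.filterMap List.getLast? := by rw [hL_def]; rfl
    rw [this]
    exact filterMap_getLast?_eq L (fun x hx => by
      rcases List.mem_iff_get.1 hx with ⟨i, rfl⟩
      exact hrowne i)
  have hanti : ∀ {i j : Fin L.length}, i ≤ j →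
      (L.get j).getD (n - 1) default ≤ (L.get i).getD (n - 1) default := by
    have hpw : List.Pairwise (· ≥ ·) (BWT w) := List.isChain_iff_pairwise.1 hchain
    rw [hBWT, List.pairwise_map] at hpw
    intro i j hij
    rcases eq_or_lt_of_le hij with h | h
    · rw [h]
    · have h2 := List.pairwise_iff_get.1 hpw i j h
      have e1 : (L.get i).getLastD default = (L.get i).getD (n - 1) default := by
        rw [getD_getLastD (hrowne i), hrowlen i]
      have e2 : (L.get j).getLastD default = (L.get j).getD (n - 1) default := by
        rw [getD_getLastD (hrowne j), hrowlen j]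
      rw [e1, e2] at h2
      exact h2
  -- heads weakly increasing along L
  have hhead : ∀ {i j : Fin L.length}, i ≤ j →
      (L.get i).getD 0 default ≤ (L.get j).getD 0 default := by
    intro i j hij
    rcases eq_or_lt_of_le hij with h | h
    · rw [h]
    · have hlt := hmono h
      have h2 : ((L.get i).head (hrowne i) :: (L.get i).tail) <
          ((L.get j).head (hrowne j) :: (L.get j).tail) := by
        rw [List.cons_head_tail, List.cons_head_tail]
        exact hlt
      have h3 := List.head_le_of_lt h2
      rwa [getD_head (hrowne i), getD_head (hrowne j)] at h3
  -- the first column is the reverse of the last column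
  have hA : ∀ i : Fin L.length,
      (L.get i).getD 0 default = (L.get i.rev).getD (n - 1) default := by
    have hmapf : (rotations w).map (fun x => x.getD 0 default) = w := by
      apply List.ext_getElem (by simp [rotations])
      intro j h1 h2
      have hj : j < n := by rwa [← hn_def] at h2
      simp only [rotations, List.getElem_map, List.getElem_range]
      show (w.rotate j).getD 0 default = w[j]
      rw [rotgetD w j 0 (by rw [← hn_def]; exact hn)]
      have he : (0 + j) % w.length = j := by
        rw [Nat.zero_add]
        apply Nat.mod_eq_of_lt
        rw [← hn_def]; omega
      rw [he, List.getD_eq_getElem _ _ h2]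
    have hmapg : (rotations w).map (fun x => x.getLastD default) = w.rotate (n - 1) := by
      apply List.ext_getElem (by simp [rotations])
      intro j h1 h2
      have hj : j < n := by
        rw [List.length_rotate, ← hn_def] at h2; exact h2
      simp only [rotations, List.getElem_map, List.getElem_range]
      show (w.rotate j).getLastD default = (w.rotate (n - 1))[j]
      have hne : (w.rotate j) ≠ [] := by
        apply List.ne_nil_of_length_pos
        rw [List.length_rotate, ← hn_def]; omega
      rw [getD_getLastD hne, List.length_rotate]
      rw [rotgetD w j (w.length - 1) (by rw [← hn_def]; omega)]
      have e3 : (w.rotate (n - 1))[j] = (w.rotate (n - 1)).getD j default := by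
        rw [List.getD_eq_getElem _ _ (by rw [List.length_rotate, ← hn_def]; omega)]
      rw [e3, rotgetD w (n - 1) j (by rw [← hn_def]; omega)]
      have he : w.length - 1 + j = j + (n - 1) := by rw [← hn_def]; omega
      rw [he]
    have hsort1 : List.Pairwise (· ≤ ·) (L.map (fun x => x.getD 0 default)) := by
      rw [List.pairwise_map]
      rw [List.pairwise_iff_get]
      intro i j hij
      exact hhead hij.le
    have hsort2 : List.Pairwise (· ≤ ·) (L.map (fun x => x.getLastD default)).reverse := by
      rw [List.pairwise_reverse, List.pairwise_map]
      rw [List.pairwise_iff_get]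
      intro i j hij
      have e1 : (L.get i).getLastD default = (L.get i).getD (n - 1) default := by
        rw [getD_getLastD (hrowne i), hrowlen i]
      have e2 : (L.get j).getLastD default = (L.get j).getD (n - 1) default := by
        rw [getD_getLastD (hrowne j), hrowlen j]
      rw [e1, e2]
      exact hanti hij.le
    have hperm12 : (L.map (fun x => x.getD 0 default)) ~
        (L.map (fun x => x.getLastD default)).reverse := by
      calc L.map (fun x => x.getD 0 default)
          ~ (rotations w).map (fun x => x.getD 0 default) := hperm.map _
        _ = w := hmapf
        _ ~ w.rotate (n - 1) := (List.rotate_perm w (n - 1)).symm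
        _ = (rotations w).map (fun x => x.getLastD default) := hmapg.symm
        _ ~ L.map (fun x => x.getLastD default) := (hperm.map _).symm
        _ ~ (L.map (fun x => x.getLastD default)).reverse :=
            (List.reverse_perm _).symm
    have heq := List.Perm.eq_of_pairwise' hsort1 hsort2 hperm12
    intro i
    have hι : (i : ℕ) < (L.map (fun x => x.getD 0 default)).length := by
      rw [List.length_map]; exact i.isLt
    have h1 : (L.map (fun x => x.getD 0 default)).getD i default
        = (L.get i).getD 0 default := by
      rw [List.getD_eq_getElem _ _ hι, List.getElem_map]
      rw [List.get_eq_getElem]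
    have h2 : ((L.map (fun x => x.getLastD default)).reverse).getD i default
        = (L.get i.rev).getD (n - 1) default := by
      have hι2 : (i : ℕ) < ((L.map (fun x => x.getLastD default)).reverse).length := by
        rw [List.length_reverse, List.length_map]; exact i.isLt
      rw [List.getD_eq_getElem _ _ hι2, List.getElem_reverse]
      have hι3 : (L.map fun x => x.getLastD default).length - 1 - (i : ℕ)
          < (L.map fun x => x.getLastD default).length := by
        rw [List.length_map]
        have := i.isLt
        omega
      rw [← List.getD_eq_getElem _ default hι3]
      have hidx : (L.map fun x => x.getLastD default).length - 1 - (i : ℕ)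
          = ((i.rev : Fin L.length) : ℕ) := by
        rw [List.length_map, Fin.val_rev]
        omega
      rw [hidx]
      have hι4 : ((i.rev : Fin L.length) : ℕ) < (L.map fun x => x.getLastD default).length := by
        rw [List.length_map]; exact i.rev.isLt
      rw [List.getD_eq_getElem _ _ hι4, List.getElem_map]
      rw [← List.get_eq_getElem]
      rw [getD_getLastD (hrowne i.rev), hrowlen i.rev]
    rw [← h1, ← h2, heq]
  -- τ := rev ∘ π preserves last letters
  have hτlast : ∀ i : Fin L.length,
      (L.get (π i).rev).getD (n - 1) default = (L.get i).getD (n - 1) default := by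
    intro i
    rw [← hA (π i), hπhd]
  -- τ² is strictly monotone, hence the identity
  have hτ2mono : StrictMono (fun i : Fin L.length => (π (π i).rev).rev) := by
    intro i j hij
    simp only
    have hlastle := hanti hij.le
    rcases eq_or_lt_of_le hlastle with heq | hlt2
    · -- equal last letters
      have heq' : (L.get i).getLast (hrowne i) = (L.get j).getLast (hrowne j) := by
        rw [getD_getLast (hrowne i), getD_getLast (hrowne j), hrowlen i, hrowlen j, heq]
      have h1 : π i < π j := hπmono hij heq'
      have h2 : (π j).rev < (π i).rev := Fin.rev_lt_rev.2 h1
      have heq2 : (L.get (π j).rev).getLast (hrowne _) =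
          (L.get (π i).rev).getLast (hrowne _) := by
        rw [getD_getLast (hrowne ((π j).rev)), getD_getLast (hrowne ((π i).rev)),
          hrowlen, hrowlen, hτlast j, hτlast i, heq]
      have h3 : π (π j).rev < π (π i).rev := hπmono h2 heq2
      exact Fin.rev_lt_rev.2 h3
    · -- strictly smaller last letter
      by_contra hle
      push_neg at hle
      have h4 := hanti hle
      have e1 : (L.get (π (π i).rev).rev).getD (n - 1) default
          = (L.get i).getD (n - 1) default := by
        rw [hτlast ((π i).rev), hτlast i]
      have e2 : (L.get (π (π j).rev).rev).getD (n - 1) default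
          = (L.get j).getD (n - 1) default := by
        rw [hτlast ((π j).rev), hτlast j]
      rw [e1, e2] at h4
      exact absurd h4 (not_le.2 hlt2)
  have hτ2 : ∀ i : Fin L.length, (π (π i).rev).rev = i := strictmono_fin_id hτ2mono
  have hB : ∀ i : Fin L.length, π (π i).rev = i.rev := by
    intro i
    have h := congrArg Fin.rev (hτ2 i)
    rwa [Fin.rev_rev] at h
  have hBiter : ∀ (m : ℕ) (i : Fin L.length), π^[m] (π^[m] i).rev = i.rev := by
    intro m
    induction m with
    | zero => intro i; simp
    | succ m ih =>
      intro i
      rw [Function.iterate_succ_apply' π m i, Function.iterate_succ_apply π m]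
      rw [hB (π^[m] i)]
      exact ih i
  have hπmrev : ∀ (j : ℕ), j < n → ∀ i : Fin L.length,
      π^[n - j] i.rev = (π^[j] i).rev := by
    intro j hj i
    have h1 : π^[n - j] (π^[n - j] (π^[j] i)).rev = (π^[j] i).rev := hBiter (n - j) (π^[j] i)
    have h2 : π^[n - j] (π^[j] i) = i := by
      rw [← Function.iterate_add_apply]
      have he : n - j + j = n := by omega
      rw [he]
      exact hπ_n i
    rwa [h2] at h1
  -- the central symmetry: row (rev i) is the reversal of row i
  have hval : ∀ (i : Fin L.length) (j : ℕ), j < n →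
      (L.get i.rev).getD j default = (L.get i).getD (n - 1 - j) default := by
    intro i j hj
    have hm1 : 1 ≤ n - j := by omega
    have hm2 : n - j ≤ n := by omega
    -- left side
    have step1 : L.get (π^[n - j] i.rev) = (L.get i.rev).rotate ((n - 1) * (n - j)) :=
      hπiter (n - j) i.rev
    have lhs1 : (L.get (π^[n - j] i.rev)).getD 0 default
        = (L.get i.rev).getD j default := by
      rw [step1]
      have := rotgetD (L.get i.rev) ((n - 1) * (n - j)) 0
        (by rw [hrowlen]; omega)
      rw [this, hrowlen i.rev]
      congr 1
      rw [Nat.zero_add, mod_aux hn hm1 hm2]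
      omega
    have step2 : π^[n - j] i.rev = (π^[j] i).rev := hπmrev j hj i
    have lhs2 : (L.get (π^[n - j] i.rev)).getD 0 default
        = (L.get (π^[j] i).rev).getD 0 default := by rw [step2]
    -- right side
    have rhs1 : (L.get (π^[j] i).rev).getD 0 default
        = (L.get ((π^[j] i).rev).rev).getD (n - 1) default := hA ((π^[j] i).rev)
    rw [Fin.rev_rev] at rhs1
    have step3 : L.get (π^[j] i) = (L.get i).rotate ((n - 1) * j) := hπiter j i
    have rhs2 : (L.get (π^[j] i)).getD (n - 1) default
        = (L.get i).getD (n - 1 - j) default := by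
      rw [step3]
      have := rotgetD (L.get i) ((n - 1) * j) (n - 1) (by rw [hrowlen]; omega)
      rw [this, hrowlen i]
      congr 1
      have he : (n - 1) + (n - 1) * j = (n - 1) * (j + 1) := by ring
      rw [he, mod_aux hn (by omega) (by omega)]
      omega
    rw [← lhs1, lhs2, rhs1, rhs2]
  have hkey : ∀ i : Fin L.length, L.get i.rev = (L.get i).reverse := by
    intro i
    apply List.ext_getElem
    · rw [hrowlen i.rev, List.length_reverse, hrowlen i]
    · intro j h1 h2
      have hj : j < n := by rwa [hrowlen i.rev] at h1
      have e1 : (L.get i.rev)[j] = (L.get i.rev).getD j default :=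
        (List.getD_eq_getElem _ _ h1).symm
      have e2 : (L.get i).reverse[j] = (L.get i).getD (n - 1 - j) default := by
        rw [List.getElem_reverse]
        have h3 : (L.get i).length - 1 - j < (L.get i).length := by
          rw [hrowlen i]; omega
        rw [← List.getD_eq_getElem _ default h3, hrowlen i]
      rw [e1, e2]
      exact hval i j hj
  -- conclude
  have hwmem : w ∈ L := (hmemL w).2 ⟨0, hn, List.rotate_zero w⟩
  obtain ⟨i0, hi0⟩ := List.mem_iff_get.1 hwmem
  have hrev : L.get i0.rev = w.reverse := by rw [hkey, hi0]
  obtain ⟨m, _, hm⟩ := hrow i0.rev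
  exact ⟨m, by rw [hm, hrev]⟩
end

section
/- Vectors v ∈ ℤ^4 with coordinate sum 0 whose first coordinate is 0 (or whose last coordinate is 0), together with (-1,1,-1,1), generate the lattice of all integer vectors in the plane they span: precisely, if v ∈ ℤ^4 has coordinate sum zero and first coordinate zero, and v generates the group of lattice points on its line, then {v, (-1,1,-1,1)} is a ℤ-basis of ℤ^4 ∩ span_ℚ{v, (-1,1,-1,1)}. -/
theorem stmt18 (v : Fin 4 → ℤ) (hsum : ∑ i, v i = 0)
    (hzero : v 0 = 0 ∨ v 3 = 0)
    (hprim : ∀ (m : ℤ) (u : Fin 4 → ℤ), v = m • u → IsUnit m) :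
    ∀ x : Fin 4 → ℤ,
      (fun i => (x i : ℚ)) ∈ Submodule.span ℚ
        ({fun i => (v i : ℚ), ![-1, 1, -1, 1]} : Set (Fin 4 → ℚ)) →
      ∃! c : ℤ × ℤ, x = c.1 • v + c.2 • (![-1, 1, -1, 1] : Fin 4 → ℤ) := by
  intro x hx
  set w : Fin 4 → ℤ := ![-1, 1, -1, 1] with hw
  have hvne : ∃ j, v j ≠ 0 := by
    by_contra h
    push_neg at h
    have h0 : v = (0 : ℤ) • v := by
      funext i; simp [h i]
    have := hprim 0 v h0
    simp at this
  obtain ⟨k, hvk, hwk⟩ : ∃ k, v k = 0 ∧ w k * w k = 1 := by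
    rcases hzero with h | h
    · exact ⟨0, h, by norm_num [hw]⟩
    · exact ⟨3, h, by norm_num [hw]; rfl⟩
  have hcast : ∀ i, ((w i : ℤ) : ℚ) = (![-1, 1, -1, 1] : Fin 4 → ℚ) i := by
    intro i; fin_cases i <;> simp [hw]
  obtain ⟨a, b, hab⟩ := Submodule.mem_span_pair.1 hx
  have hcoord : ∀ i, a * (v i : ℚ) + b * ((w i : ℤ) : ℚ) = (x i : ℚ) := by
    intro i
    have h := congrFun hab i
    simp only [Pi.add_apply, Pi.smul_apply, smul_eq_mul] at h
    rw [hcast]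
    exact h
  -- determine b
  have hb : b = ((x k * w k : ℤ) : ℚ) := by
    have h1 := hcoord k
    rw [hvk] at h1
    have h2 : b * (w k : ℚ) = (x k : ℚ) := by push_cast at h1 ⊢; linarith
    have h3 : (w k : ℚ) * (w k : ℚ) = 1 := by
      have := hwk; push_cast; exact_mod_cast congrArg (Int.cast : ℤ → ℚ) this
    push_cast
    calc b = b * ((w k : ℚ) * (w k : ℚ)) := by rw [h3]; ring
    _ = (x k : ℚ) * (w k : ℚ) := by rw [← mul_assoc, h2]
  set B : ℤ := x k * w k with hB
  set y : Fin 4 → ℤ := fun i => x i - B * w i with hy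
  have hav : ∀ i, a * (v i : ℚ) = ((y i : ℤ) : ℚ) := by
    intro i
    have h1 := hcoord i
    rw [hb] at h1
    simp only [hy]
    push_cast at h1 ⊢
    linarith
  -- a is an integer
  have hdvd : ∀ i, (a.den : ℤ) ∣ v i := by
    intro i
    have h1 : (a.num : ℚ) * (v i : ℚ) = ((y i : ℤ) : ℚ) * (a.den : ℚ) := by
      have h2 : (a.num : ℚ) = a * (a.den : ℚ) := by
        rw [mul_comm, Rat.den_mul_eq_num]
      rw [h2, mul_assoc, mul_comm (a.den : ℚ), ← mul_assoc, hav i]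
    have h3 : a.num * v i = y i * a.den := by exact_mod_cast h1
    have hcop : IsCoprime (a.den : ℤ) a.num := by
      rw [Int.isCoprime_iff_gcd_eq_one, Int.gcd_comm]
      exact a.reduced
    have : (a.den : ℤ) ∣ a.num * v i := by rw [h3]; exact dvd_mul_left _ _
    exact hcop.dvd_of_dvd_mul_left this
  have hden1 : (a.den : ℤ) = 1 := by
    have h0 : v = (a.den : ℤ) • fun i => v i / a.den := by
      funext i
      simp only [Pi.smul_apply, smul_eq_mul]
      exact (Int.mul_ediv_cancel' (hdvd i)).symm
    have := hprim _ _ h0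
    rcases Int.isUnit_iff.1 this with h | h
    · exact h
    · omega
  have ha : a = (a.num : ℚ) := by
    have hd : ((a.den : ℕ) : ℚ) = 1 := by exact_mod_cast hden1
    conv_lhs => rw [← Rat.num_div_den a]
    rw [hd, div_one]
  set A : ℤ := a.num with hA
  have key : ∀ (c1 c2 : ℤ), (∀ i, (c1 * v i + c2 * w i : ℚ) = (x i : ℚ)) →
      x = c1 • v + c2 • w := by
    intro c1 c2 h
    funext i
    have := h i
    have : (c1 * v i + c2 * w i : ℤ) = x i := by exact_mod_cast this
    simp [Pi.add_apply, ← this]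
  have hex : x = A • v + B • w := by
    apply key
    intro i
    have h1 := hcoord i
    rw [ha, hb] at h1
    push_cast at h1 ⊢
    linarith
  refine ⟨(A, B), hex, ?_⟩
  rintro ⟨c1, c2⟩ hc
  have hck : ∀ i, x i = c1 * v i + c2 * w i := by
    intro i; rw [hc]; simp
  have hAk : ∀ i, x i = A * v i + B * w i := by
    intro i; rw [hex]; simp
  have hc2 : c2 = B := by
    have h1 := hck k
    rw [hvk] at h1
    have : c2 * w k = x k := by linarith
    have h2 : c2 * (w k * w k) = x k * w k := by rw [← mul_assoc, this]
    rw [hwk, mul_one] at h2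
    simpa [hB] using h2
  obtain ⟨j, hj⟩ := hvne
  have hc1 : c1 = A := by
    have h1 := hck j
    have h2 := hAk j
    rw [hc2] at h1
    have : c1 * v j = A * v j := by linarith
    have := mul_right_cancel₀ hj this
    exact this
  simp [hc1, hc2]
end
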